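/- arXiv:2106.09101 — 4 statements merged into one kernel-verified Lean document; each statement's English description precedes it below -/
import Mathlib

section
/- Let X be a Polish space and N ≥ 1. (a) A probability measure λ ∈ 𝒫(X) belongs to 𝒫_{1/N}(X) if and only if for every m ∈ {0,1,…,N−1} and every Borel set A ⊆ X one has λ(A)² − ((2m+1)/N)·λ(A) + m(m+1)/N² ≥ 0, i.e. (λ⊗λ)(A×A) − ((2m+1)/N)·(id^{⊗2}_#λ)(A×A) ≥ −m(m+1)/N². (b) The set 𝒫_{1/N}(X) is closed under narrow convergence. -/
open MeasureTheory Filter Topology ENNReal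

noncomputable section

namespace FiniteDeFinetti

variable {X : Type*}

/-- The symmetrization `S_N γ := (1/N!) ∑_{σ ∈ S_N} γ^σ` of a measure on `X^N`,
where `γ^σ` is the pushforward of `γ` under the coordinate permutation induced by `σ`. -/
def symmetrize [MeasurableSpace X] (N : ℕ) (γ : Measure (Fin N → X)) :
    Measure (Fin N → X) :=
  (N.factorial : ℝ≥0∞)⁻¹ • ∑ σ : Equiv.Perm (Fin N), γ.map (fun x i => x (σ i))

/-- The `k`-point marginal `M_k γ` of a measure on `X^N` (projection on the first `k` coords). -/
def marginal [MeasurableSpace X] {k N : ℕ} (h : k ≤ N) (γ : Measure (Fin N → X)) :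
    Measure (Fin k → X) :=
  γ.map (fun x i => x (Fin.castLE h i))

/-- `𝒫_sym(X^N)`: symmetric probability measures on `X^N`. -/
def PsymSet [MeasurableSpace X] (N : ℕ) : Set (Measure (Fin N → X)) :=
  {γ | IsProbabilityMeasure γ ∧ γ = symmetrize N γ}

/-- `𝒫_{N-rep}(X^k)`: the `N`-representable `k`-plans. -/
def NRep [MeasurableSpace X] {k N : ℕ} (h : k ≤ N) : Set (Measure (Fin k → X)) :=
  {μ | ∃ γ : Measure (Fin N → X), γ ∈ PsymSet N ∧ μ = marginal h γ}

/-- Narrow (weak) convergence of a sequence of measures: convergence of integrals of all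
bounded continuous functions. -/
def NarrowTendsto {Y : Type*} [MeasurableSpace Y] [TopologicalSpace Y]
    (μs : ℕ → Measure Y) (μ : Measure Y) : Prop :=
  ∀ φ : BoundedContinuousFunction Y ℝ,
    Tendsto (fun n => ∫ y, φ y ∂(μs n)) atTop (𝓝 (∫ y, φ y ∂μ))

/-- The empirical measure `(1/N) ∑ δ_{x_i}`. -/
def empirical [MeasurableSpace X] (N : ℕ) (x : Fin N → X) : Measure X :=
  (N : ℝ≥0∞)⁻¹ • ∑ i, Measure.dirac (x i)

/-- Extreme point of a convex set of measures. -/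
def IsExtremePt {Y : Type*} [MeasurableSpace Y] (C : Set (Measure Y)) (μ : Measure Y) : Prop :=
  μ ∈ C ∧ ∀ μ1 ∈ C, ∀ μ2 ∈ C, ∀ t : ℝ≥0∞, 0 < t → t < 1 →
    μ = t • μ1 + (1 - t) • μ2 → μ1 = μ ∧ μ2 = μ

/-- The set `E_{N,k}` of marginals of symmetrized Dirac measures. -/
def ENk [MeasurableSpace X] {k N : ℕ} (h : k ≤ N) : Set (Measure (Fin k → X)) :=
  {μ | ∃ x : Fin N → X, μ = marginal h (symmetrize N (Measure.dirac x))}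

/-- Borel σ-algebra on the space of probability measures with its narrow topology. -/
instance instMSPM {Y : Type*} [MeasurableSpace Y] [TopologicalSpace Y]
    [OpensMeasurableSpace Y] : MeasurableSpace (ProbabilityMeasure Y) := borel _

lemma empirical_isProbabilityMeasure [MeasurableSpace X] {N : ℕ} (hN : 0 < N) (x : Fin N → X) :
    IsProbabilityMeasure (empirical N x) := by
  constructor
  simp only [empirical, Measure.smul_apply, smul_eq_mul]
  rw [Measure.finset_sum_apply]
  simp only [measure_univ, Finset.sum_const, Finset.card_univ, Fintype.card_fin, nsmul_eq_mul,
    mul_one]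
  exact ENNReal.inv_mul_cancel (by exact_mod_cast hN.ne') (natCast_ne_top N)

/-- The empirical-measure map `Λ : X^N → 𝒫(X)`. -/
def empPM [MeasurableSpace X] {N : ℕ} (hN : 0 < N) (x : Fin N → X) : ProbabilityMeasure X :=
  ⟨empirical N x, empirical_isProbabilityMeasure hN x⟩

/-- The set `𝒫_{1/N}(X)` of `1/N`-quantized probability measures (as probability measures). -/
def QuantizedPM [MeasurableSpace X] (N : ℕ) : Set (ProbabilityMeasure X) :=
  {lam | ∃ x : Fin N → X, (lam : Measure X) = empirical N x}

open Classical in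
/-- The extremal `N`-representable `k`-plan `F_{N,k}(λ)` associated with a `1/N`-quantized
probability measure `λ = (1/N) ∑ δ_{x_i}`, namely `M_k S_N δ_{(x_1,…,x_N)}` (this does not
depend on the chosen enumeration of the atoms of `λ` counted with multiplicity); junk value
`λ^{⊗k}` for non-quantized `λ`. -/
def FNk [MeasurableSpace X] {k N : ℕ} (h : k ≤ N) (lam : ProbabilityMeasure X) :
    Measure (Fin k → X) :=
  if hx : ∃ x : Fin N → X, (lam : Measure X) = empirical N x then
    marginal h (symmetrize N (Measure.dirac (Classical.choose hx)))
  else Measure.pi fun _ => (lam : Measure X)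


/-- The set of `1/N`-quantized probability measures, as a set of measures. -/
def Quantized [MeasurableSpace X] (N : ℕ) : Set (Measure X) :=
  {lam | ∃ x : Fin N → X, lam = empirical N x}

/-! ### Auxiliary lemmas for Statement 1 -/

section Aux

open Classical in
lemma emp_apply [MeasurableSpace X] {N : ℕ} (x : Fin N → X) {A : Set X}
    (hA : MeasurableSet A) :
    empirical N x A
      = ((Finset.univ.filter (fun i => x i ∈ A)).card : ℝ≥0∞) / N := by
  classical
  simp only [empirical, Measure.smul_apply, smul_eq_mul]
  rw [Measure.finset_sum_apply]
  have h : ∀ i : Fin N, Measure.dirac (x i) A = if x i ∈ A then (1:ℝ≥0∞) else 0 := by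
    intro i
    rw [Measure.dirac_apply' _ hA]
    by_cases hxi : x i ∈ A <;> simp [hxi]
  rw [Finset.sum_congr rfl fun i _ => h i, Finset.sum_boole, ENNReal.div_eq_inv_mul]

lemma quantized_vals [MeasurableSpace X] {N : ℕ} {lam : Measure X}
    (h : lam ∈ Quantized (X := X) N) {A : Set X} (hA : MeasurableSet A) :
    ∃ j : ℕ, j ≤ N ∧ lam A = j / N := by
  obtain ⟨x, rfl⟩ := h
  classical
  refine ⟨(Finset.univ.filter (fun i => x i ∈ A)).card, ?_, emp_apply x hA⟩
  calc (Finset.univ.filter (fun i => x i ∈ A)).card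
      ≤ (Finset.univ : Finset (Fin N)).card := Finset.card_filter_le _ _
    _ = N := by simp

lemma atom_exists [MetricSpace X] [MeasurableSpace X] [BorelSpace X]
    [SecondCountableTopology X] {N : ℕ} (hNtop : (N:ℝ≥0∞) ≠ ⊤) (lam : Measure X)
    [IsFiniteMeasure lam] (hlam : lam ≠ 0)
    (hD : ∀ A : Set X, MeasurableSet A → ∃ j : ℕ, lam A = j / N) :
    ∃ x : X, (1 : ℝ≥0∞) / N ≤ lam {x} := by
  have hmin : ∀ A : Set X, MeasurableSet A → lam A ≠ 0 → (1:ℝ≥0∞)/N ≤ lam A := by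
    intro A hA hA0
    obtain ⟨j, hj⟩ := hD A hA
    have hj1 : 1 ≤ j := by
      rcases Nat.eq_zero_or_pos j with h0 | h1
      · exfalso; apply hA0; rw [hj, h0]; simp
      · exact h1
    rw [hj]
    exact ENNReal.div_le_div_right (by exact_mod_cast hj1) _
  obtain ⟨T, hTS, hTc, hTU⟩ := TopologicalSpace.isOpen_sUnion_countable
    {U : Set X | IsOpen U ∧ lam U = 0} (fun U hU => hU.1)
  have hz : lam (⋃₀ {U : Set X | IsOpen U ∧ lam U = 0}) = 0 := by
    rw [← hTU]
    exact (measure_sUnion_null_iff hTS).2 fun U hU => (hTc hU).2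
  obtain ⟨x, hx⟩ : ∃ x : X, x ∉ ⋃₀ {U : Set X | IsOpen U ∧ lam U = 0} := by
    by_contra h
    push_neg at h
    apply hlam
    rw [← Measure.measure_univ_eq_zero, ← Set.eq_univ_of_forall h]
    exact hz
  refine ⟨x, ?_⟩
  have hball : ∀ n : ℕ, (1:ℝ≥0∞)/N ≤ lam (Metric.ball x (1/((n:ℝ)+1))) := by
    intro n
    apply hmin _ measurableSet_ball
    intro h0
    exact hx ⟨Metric.ball x (1/((n:ℝ)+1)), ⟨Metric.isOpen_ball, h0⟩,
      Metric.mem_ball_self (by positivity)⟩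
  have hInter : ⋂ n : ℕ, Metric.ball x (1/((n:ℝ)+1)) = {x} := by
    ext y
    simp only [Set.mem_iInter, Metric.mem_ball, Set.mem_singleton_iff]
    constructor
    · intro h
      by_contra hxy
      have hd : 0 < dist y x := dist_pos.2 hxy
      obtain ⟨n, hn⟩ := exists_nat_one_div_lt hd
      exact absurd (h n) (not_lt.2 hn.le)
    · intro h; subst h; intro n; rw [dist_self]; positivity
  have htend := tendsto_measure_iInter_atTop (μ := lam)
    (s := fun n : ℕ => Metric.ball x (1/((n:ℝ)+1)))
    (fun n => measurableSet_ball.nullMeasurableSet)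
    (fun n k hnk => Metric.ball_subset_ball (by
      apply one_div_le_one_div_of_le
      · positivity
      · exact_mod_cast Nat.succ_le_succ hnk))
    ⟨0, measure_ne_top _ _⟩
  rw [hInter] at htend
  exact ge_of_tendsto' htend hball

lemma decomp [MeasurableSpace X] [TopologicalSpace X] [PolishSpace X] [BorelSpace X]
    {N : ℕ} (hN : N ≠ 0) :
    ∀ (k : ℕ) (lam : Measure X),
      (∀ A : Set X, MeasurableSet A → ∃ j : ℕ, lam A = j / N) →
      lam Set.univ = k / N →
      ∃ x : Fin k → X, lam = (N : ℝ≥0∞)⁻¹ • ∑ i, Measure.dirac (x i) := by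
  have hNtop : (N:ℝ≥0∞) ≠ ⊤ := ENNReal.natCast_ne_top N
  have hN0' : (N:ℝ≥0∞) ≠ 0 := Nat.cast_ne_zero.2 hN
  intro k
  induction k with
  | zero =>
    intro lam _ huniv
    refine ⟨Fin.elim0, ?_⟩
    have h0 : lam = 0 := by
      rw [← Measure.measure_univ_eq_zero, huniv]; simp
    rw [h0]
    simp
  | succ k ih =>
    intro lam hD huniv
    haveI : IsFiniteMeasure lam := ⟨by
      rw [huniv]; exact ENNReal.div_lt_top (ENNReal.natCast_ne_top _) hN0'⟩
    have hlam0 : lam ≠ 0 := by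
      intro h
      rw [h] at huniv
      simp only [Measure.coe_zero, Pi.zero_apply] at huniv
      rw [eq_comm, ENNReal.div_eq_zero_iff] at huniv
      rcases huniv with h1 | h1
      · exact (Nat.cast_ne_zero.2 (Nat.succ_ne_zero k)) h1
      · exact hNtop h1
    letI := TopologicalSpace.upgradeIsCompletelyMetrizable X
    obtain ⟨x, hx⟩ := atom_exists (N := N) hNtop lam hlam0 hD
    obtain ⟨j, hj⟩ := hD {x} (measurableSet_singleton x)
    have hj1 : 1 ≤ j := by
      rcases Nat.eq_zero_or_pos j with h0 | h1
      · subst h0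
        rw [hj] at hx
        simp only [Nat.cast_zero, ENNReal.zero_div, le_zero_iff] at hx
        rw [ENNReal.div_eq_zero_iff] at hx
        rcases hx with h | h
        · exact absurd h one_ne_zero
        · exact absurd h hNtop
      · exact h1
    obtain ⟨j', rfl⟩ : ∃ j', j = j' + 1 := ⟨j - 1, (Nat.succ_pred_eq_of_pos hj1).symm⟩
    set lam' : Measure X :=
      lam.restrict {x}ᶜ + (((j':ℕ):ℝ≥0∞)/N) • Measure.dirac x with hlam'
    have hdiracmem : ∀ {A : Set X}, MeasurableSet A → x ∈ A → Measure.dirac x A = 1 := by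
      intro A hA hxA
      rw [Measure.dirac_apply' _ hA]; simp [hxA]
    have hdiracnot : ∀ {A : Set X}, MeasurableSet A → x ∉ A → Measure.dirac x A = 0 := by
      intro A hA hxA
      rw [Measure.dirac_apply' _ hA]; simp [hxA]
    have happly : ∀ A : Set X, MeasurableSet A →
        lam A = lam (A ∩ {x}ᶜ) + ((j' + 1 : ℕ):ℝ≥0∞)/N * Measure.dirac x A := by
      intro A hA
      by_cases hxA : x ∈ A
      · rw [hdiracmem hA hxA, mul_one]
        have hsplit := measure_inter_add_diff (μ := lam) A (measurableSet_singleton x)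
        rw [Set.inter_eq_self_of_subset_right (Set.singleton_subset_iff.2 hxA)] at hsplit
        rw [← Set.diff_eq, ← hj, ← hsplit, add_comm]
      · rw [hdiracnot hA hxA, mul_zero, add_zero,
          Set.inter_eq_self_of_subset_left]
        intro y hy
        simp only [Set.mem_compl_iff, Set.mem_singleton_iff]
        intro hyx
        exact hxA (hyx ▸ hy)
    have hsum : lam = lam' + (N:ℝ≥0∞)⁻¹ • Measure.dirac x := by
      apply Measure.ext
      intro A hA
      rw [Measure.add_apply, Measure.smul_apply, smul_eq_mul, hlam',
        Measure.add_apply, Measure.smul_apply, smul_eq_mul, Measure.restrict_apply hA]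
      by_cases hxA : x ∈ A
      · rw [happly A hA, hdiracmem hA hxA]
        simp only [mul_one]
        rw [add_assoc]
        congr 1
        rw [← one_div, ENNReal.div_add_div_same]
        norm_cast
      · rw [happly A hA, hdiracnot hA hxA]
        simp only [mul_zero, add_zero]
    have hD' : ∀ A : Set X, MeasurableSet A → ∃ i : ℕ, lam' A = i / N := by
      intro A hA
      obtain ⟨j₂, hj₂⟩ := hD (A ∩ {x}ᶜ) (hA.inter (measurableSet_singleton x).compl)
      rw [hlam', Measure.add_apply, Measure.smul_apply, smul_eq_mul,
        Measure.restrict_apply hA, hj₂]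
      by_cases hxA : x ∈ A
      · rw [hdiracmem hA hxA, mul_one]
        refine ⟨j₂ + j', ?_⟩
        rw [ENNReal.div_add_div_same]
        norm_cast
      · rw [hdiracnot hA hxA, mul_zero, add_zero]
        exact ⟨j₂, rfl⟩
    have huniv' : lam' Set.univ = (k:ℝ≥0∞) / N := by
      have e : lam Set.univ = lam' Set.univ + (N:ℝ≥0∞)⁻¹ := by
        rw [hsum, Measure.add_apply, Measure.smul_apply, smul_eq_mul,
          hdiracmem MeasurableSet.univ (Set.mem_univ x), mul_one]
      have hcalc : ((k+1:ℕ):ℝ≥0∞)/N = (k:ℝ≥0∞)/N + (N:ℝ≥0∞)⁻¹ := by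
        rw [← one_div, ENNReal.div_add_div_same]
        push_cast
        ring_nf
      have e2 : lam' Set.univ + (N:ℝ≥0∞)⁻¹ = (k:ℝ≥0∞)/N + (N:ℝ≥0∞)⁻¹ := by
        rw [← e, huniv, hcalc]
      exact (ENNReal.add_left_inj (ENNReal.inv_ne_top.2 hN0')).1 e2
    obtain ⟨y, hy⟩ := ih lam' hD' huniv'
    refine ⟨Fin.cons x y, ?_⟩
    rw [hsum, hy, Fin.sum_univ_succ]
    simp only [Fin.cons_zero, Fin.cons_succ]
    rw [smul_add, add_comm]

lemma exists_bump [MetricSpace X] (C : Set X) (a : ℝ) {ε : ℝ} (hε : 0 < ε) :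
    ∃ f : BoundedContinuousFunction X ℝ,
      (∀ y, 0 ≤ f y) ∧ (∀ y, f y ≤ 1) ∧
      (∀ y : X, Metric.infDist y C ≤ (a - 1) * ε → f y = 1) ∧
      (∀ y : X, a * ε < Metric.infDist y C → f y = 0) := by
  have hcont : Continuous fun y : X => max 0 (min 1 (a - Metric.infDist y C / ε)) :=
    continuous_const.max (continuous_const.min
      (continuous_const.sub ((Metric.continuous_infDist_pt C).div_const ε)))
  have h1 : ∀ w : X, 0 ≤ max 0 (min 1 (a - Metric.infDist w C / ε)) :=
    fun w => le_max_left _ _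
  have h2 : ∀ w : X, max 0 (min 1 (a - Metric.infDist w C / ε)) ≤ 1 :=
    fun w => max_le zero_le_one (min_le_left _ _)
  refine ⟨BoundedContinuousFunction.mkOfBound ⟨_, hcont⟩ 1 ?_, ?_, ?_, ?_, ?_⟩
  · intro y z
    simp only [ContinuousMap.coe_mk]
    rw [Real.dist_eq, abs_sub_le_iff]
    constructor <;> linarith [h1 y, h1 z, h2 y, h2 z]
  · intro y; exact h1 y
  · intro y; exact h2 y
  · intro y hy
    have hdiv : Metric.infDist y C / ε ≤ a - 1 := (div_le_iff₀ hε).2 hy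
    show max 0 (min 1 (a - Metric.infDist y C / ε)) = 1
    rw [min_eq_left (by linarith), max_eq_right zero_le_one]
  · intro y hy
    have hdiv : a < Metric.infDist y C / ε := (lt_div_iff₀ hε).2 hy
    show max 0 (min 1 (a - Metric.infDist y C / ε)) = 0
    rw [min_eq_right (by linarith), max_eq_left (by linarith)]

lemma measure_le_integral [MeasurableSpace X] [TopologicalSpace X] [OpensMeasurableSpace X]
    (μ : Measure X) [IsProbabilityMeasure μ] (f : BoundedContinuousFunction X ℝ)
    {C : Set X} (hC : MeasurableSet C) (h0 : ∀ y, 0 ≤ f y) (h1 : ∀ y ∈ C, f y = 1) :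
    (μ C).toReal ≤ ∫ y, f y ∂μ := by
  have hber : ∫ y, C.indicator (fun _ => (1:ℝ)) y ∂μ = (μ C).toReal := by
    rw [MeasureTheory.integral_indicator_const (1:ℝ) hC]; simp; rfl
  rw [← hber]
  apply integral_mono ((integrable_const (1:ℝ)).indicator hC) (f.integrable μ)
  intro y
  by_cases hy : y ∈ C
  · simp [Set.indicator_of_mem hy, (h1 y hy).ge]
  · simp [Set.indicator_of_notMem hy, h0 y]

lemma integral_le_measure [MeasurableSpace X] [TopologicalSpace X] [OpensMeasurableSpace X]
    (μ : Measure X) [IsProbabilityMeasure μ] (f : BoundedContinuousFunction X ℝ)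
    {S : Set X} (hS : MeasurableSet S) (h1 : ∀ y, f y ≤ 1) (h0 : ∀ y ∉ S, f y = 0) :
    ∫ y, f y ∂μ ≤ (μ S).toReal := by
  have hber : ∫ y, S.indicator (fun _ => (1:ℝ)) y ∂μ = (μ S).toReal := by
    rw [MeasureTheory.integral_indicator_const (1:ℝ) hS]; simp; rfl
  rw [← hber]
  apply integral_mono (f.integrable μ) ((integrable_const (1:ℝ)).indicator hS)
  intro y
  by_cases hy : y ∈ S
  · simp [Set.indicator_of_mem hy, h1 y]
  · simp [Set.indicator_of_notMem hy, (h0 y hy).le]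

lemma not_strict_between [MeasurableSpace X] [TopologicalSpace X] [PolishSpace X]
    [BorelSpace X] {N : ℕ} (hN : N ≠ 0) {lams : ℕ → Measure X} {lam : Measure X}
    (hq : ∀ n, ∀ A : Set X, MeasurableSet A → ∃ j : ℕ, j ≤ N ∧ lams n A = j / N)
    (hpn : ∀ n, IsProbabilityMeasure (lams n)) (hp : IsProbabilityMeasure lam)
    (hconv : NarrowTendsto lams lam) {C : Set X} (hC : IsClosed C) {m : ℕ}
    (hl : (m : ℝ)/N < (lam C).toReal) (hu : (lam C).toReal < ((m:ℝ)+1)/N) : False := by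
  letI := TopologicalSpace.upgradeIsCompletelyMetrizable X
  have hNR : (0:ℝ) < N := by exact_mod_cast Nat.pos_of_ne_zero hN
  have hdivmono : ∀ {a b : ℝ}, a ≤ b → a / N ≤ b / N := by
    intro a b h
    rw [div_le_div_iff₀ hNR hNR]
    nlinarith
  have hCne : C.Nonempty := by
    rcases Set.eq_empty_or_nonempty C with h | h
    · exfalso
      rw [h, measure_empty] at hl
      simp only [ENNReal.toReal_zero] at hl
      have : (0:ℝ) ≤ (m:ℝ)/N := by positivity
      linarith
    · exact h
  set S : ℝ → Set X := fun r => {y | Metric.infDist y C ≤ r} with hSdef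
  have hSclosed : ∀ r, IsClosed (S r) := fun r =>
    isClosed_le (Metric.continuous_infDist_pt C) continuous_const
  have hSmeas : ∀ r, MeasurableSet (S r) := fun r => (hSclosed r).measurableSet
  have hInter : ⋂ n : ℕ, S (1/((n:ℝ)+1)) = C := by
    ext y
    simp only [Set.mem_iInter, hSdef, Set.mem_setOf_eq]
    constructor
    · intro h
      have h0 : Metric.infDist y C ≤ 0 := by
        by_contra hpos
        push_neg at hpos
        obtain ⟨n, hn⟩ := exists_nat_one_div_lt hpos
        exact absurd (h n) (not_le.2 hn)
      have hz : Metric.infDist y C = 0 := le_antisymm h0 Metric.infDist_nonneg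
      have := (Metric.mem_closure_iff_infDist_zero hCne).2 hz
      rwa [hC.closure_eq] at this
    · intro hy n
      rw [Metric.infDist_zero_of_mem hy]
      positivity
  have htend : Filter.Tendsto (fun n : ℕ => (lam (S (1/((n:ℝ)+1)))).toReal) atTop
      (𝓝 ((lam C).toReal)) := by
    have h1 := tendsto_measure_iInter_atTop (μ := lam)
      (s := fun n : ℕ => S (1/((n:ℝ)+1)))
      (fun n => (hSmeas _).nullMeasurableSet)
      (fun n k hnk => by
        intro y hy
        simp only [hSdef, Set.mem_setOf_eq] at hy ⊢
        refine le_trans hy (one_div_le_one_div_of_le (by positivity) ?_)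
        exact_mod_cast Nat.succ_le_succ hnk)
      ⟨0, measure_ne_top _ _⟩
    rw [hInter] at h1
    exact (ENNReal.tendsto_toReal (measure_ne_top _ _)).comp h1
  obtain ⟨n₀, hn₀⟩ := (htend.eventually_lt_const hu).exists
  set ε : ℝ := (1/((n₀:ℝ)+1))/2 with hεdef
  have hεpos : 0 < ε := by positivity
  have h2ε : 2 * ε = 1/((n₀:ℝ)+1) := by rw [hεdef]; ring
  obtain ⟨φ, hφ0, hφ1, hφone, hφzero⟩ := exists_bump C 1 hεpos
  obtain ⟨ψ, hψ0, hψ1, hψone, hψzero⟩ := exists_bump C 2 hεpos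
  have hφlam : (m:ℝ)/N < ∫ y, φ y ∂lam :=
    lt_of_lt_of_le hl (measure_le_integral lam φ hC.measurableSet hφ0
      (fun y hy => hφone y (by rw [Metric.infDist_zero_of_mem hy]; nlinarith)))
  have hev1 : ∀ᶠ n in atTop, (m:ℝ)/N < ∫ y, φ y ∂(lams n) :=
    (hconv φ).eventually_const_lt hφlam
  have hev2 : ∀ᶠ n in atTop, ((m:ℝ)+1)/N ≤ ((lams n) (S ε)).toReal := by
    filter_upwards [hev1] with n hn
    obtain ⟨j, hjN, hj⟩ := hq n (S ε) (hSmeas ε)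
    have hjr : ((lams n) (S ε)).toReal = (j:ℝ)/N := by
      rw [hj, ENNReal.toReal_div]
      simp
    have hle : ∫ y, φ y ∂(lams n) ≤ ((lams n) (S ε)).toReal :=
      integral_le_measure (lams n) φ (hSmeas ε) hφ1
        (fun y hy => hφzero y (by
          simp only [hSdef, Set.mem_setOf_eq, not_le] at hy
          linarith))
    have hmj : (m:ℝ)/N < (j:ℝ)/N := by
      rw [← hjr]
      exact lt_of_lt_of_le hn hle
    have hmjn : m < j := by
      by_contra hc
      push_neg at hc
      have : (j:ℝ) ≤ m := by exact_mod_cast hc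
      exact absurd (hdivmono this) (not_le.2 hmj)
    have : (m:ℝ)+1 ≤ (j:ℝ) := by exact_mod_cast hmjn
    rw [hjr]
    exact hdivmono this
  have hψev : ∀ᶠ n in atTop, ((m:ℝ)+1)/N ≤ ∫ y, ψ y ∂(lams n) := by
    filter_upwards [hev2] with n hn
    refine le_trans hn (measure_le_integral (lams n) ψ (hSmeas ε) hψ0 ?_)
    intro y hy
    refine hψone y ?_
    simp only [hSdef, Set.mem_setOf_eq] at hy
    linarith
  have hψlam : ((m:ℝ)+1)/N ≤ ∫ y, ψ y ∂lam := ge_of_tendsto (hconv ψ) hψev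
  have hψle : ∫ y, ψ y ∂lam ≤ (lam (S (1/((n₀:ℝ)+1)))).toReal := by
    refine integral_le_measure lam ψ (hSmeas _) hψ1 ?_
    intro y hy
    refine hψzero y ?_
    simp only [hSdef, Set.mem_setOf_eq, not_le] at hy
    linarith
  linarith

lemma limit_vals [MeasurableSpace X] [TopologicalSpace X] [PolishSpace X]
    [BorelSpace X] {N : ℕ} (hN : N ≠ 0) {lams : ℕ → Measure X} {lam : Measure X}
    (hq : ∀ n, ∀ A : Set X, MeasurableSet A → ∃ j : ℕ, j ≤ N ∧ lams n A = j / N)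
    (hpn : ∀ n, IsProbabilityMeasure (lams n)) (hp : IsProbabilityMeasure lam)
    (hconv : NarrowTendsto lams lam) :
    ∀ A : Set X, MeasurableSet A → ∃ j : ℕ, lam A = j / N := by
  intro A hA
  have hNR : (0:ℝ) < N := by exact_mod_cast Nat.pos_of_ne_zero hN
  have hNtop : (N:ℝ≥0∞) ≠ ⊤ := ENNReal.natCast_ne_top N
  set t := (lam A).toReal with ht
  by_cases hex : ∃ j : ℕ, t = (j:ℝ)/N
  · obtain ⟨j, hj⟩ := hex
    refine ⟨j, ?_⟩
    have hfin2 : (j:ℝ≥0∞)/N ≠ ⊤ := by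
      simp [ENNReal.div_eq_top, hN]
    refine (ENNReal.toReal_eq_toReal_iff' (measure_ne_top _ _) hfin2).1 ?_
    rw [← ht, hj, ENNReal.toReal_div]
    simp
  · exfalso
    have ht0 : 0 ≤ t := ENNReal.toReal_nonneg
    set m := ⌊(N:ℝ)*t⌋₊ with hm
    have hfl : (m:ℝ) ≤ (N:ℝ)*t := Nat.floor_le (by positivity)
    have hflt : (N:ℝ)*t < (m:ℝ)+1 := by
      have := Nat.lt_floor_add_one ((N:ℝ)*t)
      exact_mod_cast this
    have hne : (m:ℝ) ≠ (N:ℝ)*t := by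
      intro h
      apply hex
      refine ⟨m, ?_⟩
      rw [eq_div_iff hNR.ne']
      linarith
    have hlt : (m:ℝ) < (N:ℝ)*t := lt_of_le_of_ne hfl hne
    have hl : (m:ℝ)/N < t := by rw [div_lt_iff₀ hNR]; linarith
    have hu : t < ((m:ℝ)+1)/N := by rw [lt_div_iff₀ hNR]; linarith
    have hofr : ENNReal.ofReal ((m:ℝ)/N) < lam A := by
      rw [← ENNReal.ofReal_toReal (measure_ne_top lam A), ← ht]
      exact (ENNReal.ofReal_lt_ofReal_iff (lt_of_le_of_lt (by positivity) hl)).2 hl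
    obtain ⟨K, hKA, hKcl, hK⟩ := hA.exists_lt_isClosed_of_ne_top (measure_ne_top lam A) hofr
    have hKl : (m:ℝ)/N < (lam K).toReal := by
      have h1 := (ENNReal.toReal_lt_toReal ENNReal.ofReal_ne_top (measure_ne_top lam K)).2 hK
      rwa [ENNReal.toReal_ofReal (by positivity)] at h1
    have hKu : (lam K).toReal < ((m:ℝ)+1)/N := lt_of_le_of_lt
      (ENNReal.toReal_mono (measure_ne_top lam A) (measure_mono hKA)) hu
    exact not_strict_between hN hq hpn hp hconv hKcl hKl hKu

lemma real_quant {N : ℕ} (hNR : (0:ℝ) < N) {t : ℝ} (ht0 : 0 ≤ t) (ht1 : t ≤ 1)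
    (h : ∀ m : ℕ, m < N → 0 ≤ (t - (m:ℝ)/N) * (t - ((m:ℝ)+1)/N)) :
    ∃ j : ℕ, j ≤ N ∧ t = (j:ℝ)/N := by
  have hNnat : 0 < N := by exact_mod_cast hNR
  set m := ⌊(N:ℝ)*t⌋₊ with hm
  have hfl : (m:ℝ) ≤ (N:ℝ)*t := Nat.floor_le (by positivity)
  have hflt : (N:ℝ)*t < (m:ℝ)+1 := by
    have := Nat.lt_floor_add_one ((N:ℝ)*t)
    exact_mod_cast this
  by_cases heq : (m:ℝ) = (N:ℝ)*t
  · refine ⟨m, ?_, ?_⟩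
    · have : (m:ℝ) ≤ (N:ℝ) := by nlinarith
      exact_mod_cast this
    · rw [eq_div_iff hNR.ne']
      linarith
  · exfalso
    have hlt : (m:ℝ) < (N:ℝ)*t := lt_of_le_of_ne hfl heq
    have hmN : m < N := by
      have : (m:ℝ) < (N:ℝ) := by nlinarith
      exact_mod_cast this
    have h1 : (m:ℝ)/N < t := by rw [div_lt_iff₀ hNR]; linarith
    have h2 : t < ((m:ℝ)+1)/N := by rw [lt_div_iff₀ hNR]; linarith
    have := h m hmN
    nlinarith [mul_pos (sub_pos.2 h1) (sub_pos.2 h2)]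

end Aux

/-- (a) A probability measure `λ` on a Polish space `X` is `1/N`-quantized iff
for every `m ∈ {0,…,N−1}` and every Borel set `A`,
`λ(A)² − ((2m+1)/N)·λ(A) + m(m+1)/N² ≥ 0`.
(b) The set `𝒫_{1/N}(X)` is closed under narrow convergence. -/
theorem quantized_iff_quadratic_and_closed
    {X : Type*} [MeasurableSpace X] [TopologicalSpace X] [PolishSpace X] [BorelSpace X]
    {N : ℕ} (hN : 1 ≤ N) :
    (∀ lam : Measure X, IsProbabilityMeasure lam →
      (lam ∈ Quantized (X := X) N ↔
        ∀ m : ℕ, m < N → ∀ A : Set X, MeasurableSet A →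
          (lam A).toReal ^ 2 - ((2 * m + 1 : ℝ) / N) * (lam A).toReal
              + (m * (m + 1) : ℝ) / N ^ 2 ≥ 0)) ∧
    (∀ (lams : ℕ → Measure X) (lam : Measure X),
      (∀ n, lams n ∈ Quantized (X := X) N) → (∀ n, IsProbabilityMeasure (lams n)) →
      IsProbabilityMeasure lam → NarrowTendsto lams lam →
      lam ∈ Quantized (X := X) N) := by
  have hN0 : N ≠ 0 := by omega
  have hNR : (0:ℝ) < N := by exact_mod_cast Nat.pos_of_ne_zero hN0
  have hNtop : (N:ℝ≥0∞) ≠ ⊤ := ENNReal.natCast_ne_top N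
  have hN0' : (N:ℝ≥0∞) ≠ 0 := Nat.cast_ne_zero.2 hN0
  have hfac : ∀ (s : ℝ) (m : ℕ),
      s ^ 2 - ((2 * m + 1 : ℝ) / N) * s + (m * (m + 1) : ℝ) / N ^ 2
        = (s - (m:ℝ)/N) * (s - ((m:ℝ)+1)/N) := by
    intro s m
    field_simp
    ring
  constructor
  · intro lam hprob
    constructor
    · intro hmem m hm A hA
      obtain ⟨j, hjN, hj⟩ := quantized_vals hmem hA
      have ht : (lam A).toReal = (j:ℝ)/N := by
        rw [hj, ENNReal.toReal_div]
        simp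
      rw [ge_iff_le, ht, hfac]
      have key : 0 ≤ ((j:ℝ) - m) * ((j:ℝ) - ((m:ℝ)+1)) := by
        rcases le_or_gt j m with hc | hc
        · have h1 : (j:ℝ) ≤ m := by exact_mod_cast hc
          nlinarith
        · have h1 : (m:ℝ)+1 ≤ (j:ℝ) := by exact_mod_cast hc
          nlinarith
      have heq : ((j:ℝ)/N - (m:ℝ)/N) * ((j:ℝ)/N - ((m:ℝ)+1)/N)
          = ((j:ℝ) - m) * ((j:ℝ) - ((m:ℝ)+1)) / N ^ 2 := by
        rw [div_sub_div_same, div_sub_div_same, div_mul_div_comm, ← sq]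
      rw [heq]
      positivity
    · intro h
      have hD : ∀ A : Set X, MeasurableSet A → ∃ j : ℕ, lam A = j / N := by
        intro A hA
        have ht0 : 0 ≤ (lam A).toReal := ENNReal.toReal_nonneg
        have ht1 : (lam A).toReal ≤ 1 := by
          have h1 : lam A ≤ 1 := prob_le_one
          have := ENNReal.toReal_mono ENNReal.one_ne_top h1
          simpa using this
        obtain ⟨j, hjN, hj⟩ := real_quant hNR ht0 ht1 (fun m hm => by
          have := h m hm A hA
          rw [ge_iff_le, hfac] at this
          exact this)
        refine ⟨j, ?_⟩
        have hfin2 : (j:ℝ≥0∞)/N ≠ ⊤ := by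
          simp [ENNReal.div_eq_top, hN0]
        refine (ENNReal.toReal_eq_toReal_iff' (measure_ne_top _ _) hfin2).1 ?_
        rw [hj, ENNReal.toReal_div]
        simp
      obtain ⟨x, hx⟩ := decomp hN0 N lam hD (by
        rw [measure_univ]
        exact (ENNReal.div_self hN0' hNtop).symm)
      exact ⟨x, hx⟩
  · intro lams lam hq hpn hp hconv
    have hq' : ∀ n, ∀ A : Set X, MeasurableSet A → ∃ j : ℕ, j ≤ N ∧ lams n A = j / N :=
      fun n A hA => quantized_vals (hq n) hA
    have hD := limit_vals hN0 hq' hpn hp hconv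
    obtain ⟨x, hx⟩ := decomp hN0 N lam hD (by
      rw [measure_univ]
      exact (ENNReal.div_self hN0' hNtop).symm)
    exact ⟨x, hx⟩

end FiniteDeFinetti
end
end

section
/- Let X = {a_1, …, a_ℓ} be a finite set of ℓ distinct points, and let 2 ≤ k ≤ N. A measure μ on X^k is an extreme point of 𝒫_{N-rep}(X^k) if and only if it is of the form μ = M_k S_N δ_{(a_{i_1},…,a_{i_N})} for some indices 1 ≤ i_1 ≤ … ≤ i_N ≤ ℓ. Moreover, the marginal map M_k restricts to a bijection from the set of extreme points of 𝒫_sym(X^N) onto the set of extreme points of 𝒫_{N-rep}(X^k). -/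
open MeasureTheory Filter Topology ENNReal

noncomputable section

namespace FiniteDeFinetti

variable {X : Type*}

set_option linter.unusedSectionVars false
set_option linter.unusedVariables false
set_option maxHeartbeats 1000000

section Tools
variable {Y : Type*} [Fintype Y] [MeasurableSpace Y] [MeasurableSingletonClass Y]
lemma meas_finset_eq_sum (μ : Measure Y) (s : Finset Y) : μ s = ∑ y ∈ s, μ {y} := by
  have h : (s : Set Y) = ⋃ y ∈ s, {y} := by ext z; simp
  rw [h, measure_biUnion_finset]
  · intro i _ j _ hij
    simp [Set.disjoint_singleton, hij]
  · intro b _; exact measurableSet_singleton b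
lemma meas_univ_eq_sum (μ : Measure Y) : μ Set.univ = ∑ y, μ {y} := by
  rw [← Finset.coe_univ, meas_finset_eq_sum]
lemma meas_set_eq_sum (μ : Measure Y) (p : Y → Prop) [DecidablePred p] :
    μ {y | p y} = ∑ y ∈ Finset.univ.filter p, μ {y} := by
  rw [← meas_finset_eq_sum]; congr 1; ext y; simp
lemma meas_ext_sing {μ ν : Measure Y} (h : ∀ y, μ {y} = ν {y}) : μ = ν := by
  classical
  ext s _
  have hs : s = {y | y ∈ s} := rfl
  rw [hs, meas_set_eq_sum, meas_set_eq_sum]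
  exact Finset.sum_congr rfl fun y _ => h y
lemma map_sing {Z : Type*} [MeasurableSpace Z] [MeasurableSingletonClass Z]
    (μ : Measure Y) (f : Y → Z) (z : Z) :
    μ.map f {z} = μ (f ⁻¹' {z}) :=
  Measure.map_apply (measurable_of_countable f) (measurableSet_singleton z)
lemma dirac_sing [DecidableEq Y] (x y : Y) :
    (Measure.dirac x : Measure Y) {y} = if x = y then 1 else 0 := by
  by_cases h : x = y
  · subst h; rw [if_pos rfl]
    exact Measure.dirac_apply_of_mem rfl
  · rw [if_neg h, Measure.dirac_apply' _ (measurableSet_singleton y)]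
    simp [h]
end Tools

section Counts
variable {X : Type*} [Fintype X] [DecidableEq X] {N : ℕ}
def cnt (y : Fin N → X) (a : X) : ℕ := (Finset.univ.filter fun i => y i = a).card
lemma cnt_comp_perm (y : Fin N → X) (σ : Equiv.Perm (Fin N)) : cnt (y ∘ σ) = cnt y := by
  funext a
  unfold cnt
  apply Finset.card_bij' (fun i _ => σ i) (fun i _ => σ.symm i) <;>
    simp [Function.comp]
lemma exists_perm_of_cnt_eq {x y : Fin N → X} (h : cnt x = cnt y) :
    ∃ σ : Equiv.Perm (Fin N), y = x ∘ σ := by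
  have e : ∀ c : X, { i // y i = c } ≃ { i // x i = c } := fun c =>
    Fintype.equivOfCardEq (by
      rw [Fintype.card_subtype, Fintype.card_subtype]
      exact (congrFun h c).symm)
  refine ⟨Equiv.ofFiberEquiv e, ?_⟩
  funext i
  exact (Equiv.ofFiberEquiv_map e i).symm
end Counts

section Symm
variable {X : Type*} [Fintype X] [DecidableEq X] [MeasurableSpace X]
  [MeasurableSingletonClass X] {N : ℕ}

lemma factorial_ne_zero' : (N.factorial : ℝ≥0∞) ≠ 0 := by
  exact_mod_cast Nat.cast_ne_zero.mpr N.factorial_ne_zero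

lemma factorial_ne_top' : (N.factorial : ℝ≥0∞) ≠ ∞ := natCast_ne_top _

lemma permAct_preimage (σ : Equiv.Perm (Fin N)) (y : Fin N → X) :
    (fun x i => x (σ i)) ⁻¹' ({y} : Set (Fin N → X)) = {y ∘ ⇑σ⁻¹} := by
  ext x
  simp only [Set.mem_preimage, Set.mem_singleton_iff]
  constructor
  · intro h; funext i
    have := congrFun h (σ⁻¹ i)
    simpa using this
  · intro h; subst h; funext i; simp

lemma symmetrize_sing (γ : Measure (Fin N → X)) (y : Fin N → X) :
    symmetrize N γ {y} = (N.factorial : ℝ≥0∞)⁻¹ * ∑ σ : Equiv.Perm (Fin N), γ {y ∘ ⇑σ} := by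
  simp only [symmetrize, Measure.smul_apply, smul_eq_mul, Measure.finset_sum_apply]
  congr 1
  rw [← Equiv.sum_comp (Equiv.inv (Equiv.Perm (Fin N))) (fun σ => γ {y ∘ ⇑σ})]
  apply Finset.sum_congr rfl
  intro σ _
  rw [map_sing, permAct_preimage]
  rfl

lemma symmetrize_sing_comp (γ : Measure (Fin N → X)) (y : Fin N → X) (τ : Equiv.Perm (Fin N)) :
    symmetrize N γ {y ∘ ⇑τ} = symmetrize N γ {y} := by
  rw [symmetrize_sing, symmetrize_sing]
  congr 1
  rw [← Equiv.sum_comp (Equiv.mulLeft τ) (fun σ => γ {y ∘ ⇑σ})]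
  exact Finset.sum_congr rfl fun σ _ => rfl

lemma psym_invariant {γ : Measure (Fin N → X)} (hγ : γ ∈ PsymSet N)
    (y : Fin N → X) (σ : Equiv.Perm (Fin N)) : γ {y ∘ ⇑σ} = γ {y} := by
  calc γ {y ∘ ⇑σ} = symmetrize N γ {y ∘ ⇑σ} := by rw [← hγ.2]
  _ = symmetrize N γ {y} := symmetrize_sing_comp γ y σ
  _ = γ {y} := by rw [← hγ.2]

lemma symm_of_invariant {μ : Measure (Fin N → X)}
    (h : ∀ (y : Fin N → X) (σ : Equiv.Perm (Fin N)), μ {y ∘ ⇑σ} = μ {y}) :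
    μ = symmetrize N μ := by
  apply meas_ext_sing
  intro y
  rw [symmetrize_sing]
  rw [Finset.sum_congr rfl (fun σ _ => h y σ), Finset.sum_const, Finset.card_univ,
    Fintype.card_perm, Fintype.card_fin, nsmul_eq_mul, ← mul_assoc,
    ENNReal.inv_mul_cancel factorial_ne_zero' factorial_ne_top', one_mul]

lemma symmetrize_idem (γ : Measure (Fin N → X)) :
    symmetrize N γ = symmetrize N (symmetrize N γ) :=
  symm_of_invariant (fun y σ => symmetrize_sing_comp γ y σ)

lemma symmetrize_univ (γ : Measure (Fin N → X)) :
    symmetrize N γ Set.univ = γ Set.univ := by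
  simp only [symmetrize, Measure.smul_apply, smul_eq_mul, Measure.finset_sum_apply]
  rw [Finset.sum_congr rfl (fun σ _ => by
    rw [Measure.map_apply (measurable_of_countable _) MeasurableSet.univ, Set.preimage_univ]),
    Finset.sum_const, Finset.card_univ, Fintype.card_perm, Fintype.card_fin, nsmul_eq_mul,
    ← mul_assoc, ENNReal.inv_mul_cancel factorial_ne_zero' factorial_ne_top', one_mul]

lemma symmetrize_isProb (γ : Measure (Fin N → X)) [IsProbabilityMeasure γ] :
    IsProbabilityMeasure (symmetrize N γ) :=
  ⟨by rw [symmetrize_univ]; exact measure_univ⟩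

/-- the symmetrized Dirac measure -/
def eta (N : ℕ) (x : Fin N → X) : Measure (Fin N → X) := symmetrize N (Measure.dirac x)

lemma eta_mem_psym (x : Fin N → X) : eta N x ∈ PsymSet N :=
  ⟨symmetrize_isProb _, symmetrize_idem _⟩

lemma eta_sing (x y : Fin N → X) :
    eta N x {y} = (N.factorial : ℝ≥0∞)⁻¹ *
      ∑ σ : Equiv.Perm (Fin N), (if x = y ∘ ⇑σ then 1 else 0) := by
  rw [eta, symmetrize_sing]
  congr 1
  exact Finset.sum_congr rfl fun σ _ => dirac_sing x (y ∘ ⇑σ)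

lemma eta_sing_eq_zero {x y : Fin N → X} (h : cnt y ≠ cnt x) : eta N x {y} = 0 := by
  classical
  rw [eta_sing]
  have : ∀ σ : Equiv.Perm (Fin N), (if x = y ∘ ⇑σ then (1:ℝ≥0∞) else 0) = 0 := by
    intro σ
    rw [if_neg]
    intro hx
    exact h (by rw [← cnt_comp_perm y σ, ← hx])
  rw [Finset.sum_congr rfl (fun σ _ => this σ), Finset.sum_const_zero, mul_zero]

lemma eta_comp_perm (x : Fin N → X) (σ : Equiv.Perm (Fin N)) : eta N (x ∘ ⇑σ) = eta N x := by
  classical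
  apply meas_ext_sing
  intro y
  rw [eta_sing, eta_sing]
  congr 1
  rw [← Equiv.sum_comp (Equiv.mulRight σ⁻¹) (fun τ => if x = y ∘ ⇑τ then (1:ℝ≥0∞) else 0)]
  apply Finset.sum_congr rfl
  intro τ _
  simp only [Equiv.coe_mulRight]
  congr 1
  simp only [eq_iff_iff]
  constructor
  · intro h; funext i
    have := congrFun h (σ⁻¹ i)
    simpa using this
  · intro h; funext i
    have := congrFun h (σ i)
    simpa using this


lemma marginal_univ {k : ℕ} (h : k ≤ N) (γ : Measure (Fin N → X)) :
    marginal h γ Set.univ = γ Set.univ := by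
  rw [marginal, Measure.map_apply (measurable_of_countable _) MeasurableSet.univ,
    Set.preimage_univ]

lemma marginal_isProb {k : ℕ} (h : k ≤ N) (γ : Measure (Fin N → X)) [IsProbabilityMeasure γ] :
    IsProbabilityMeasure (marginal h γ) :=
  ⟨by rw [marginal_univ]; exact measure_univ⟩

lemma marginal_comp {k2 k : ℕ} (h2 : k2 ≤ k) (h : k ≤ N) (γ : Measure (Fin N → X)) :
    marginal h2 (marginal h γ) = marginal (h2.trans h) γ := by
  rw [marginal, marginal, marginal,
    Measure.map_map (measurable_of_countable _) (measurable_of_countable _)]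
  rfl

lemma marginal_convex {k : ℕ} (h : k ≤ N) (γ1 γ2 : Measure (Fin N → X)) (t s : ℝ≥0∞) :
    marginal h (t • γ1 + s • γ2) = t • marginal h γ1 + s • marginal h γ2 := by
  rw [marginal, Measure.map_add _ _ (measurable_of_countable _), Measure.map_smul,
    Measure.map_smul]
  rfl

lemma combo_sing {γ1 γ2 : Measure (Fin N → X)} (t s : ℝ≥0∞) (y : Fin N → X) :
    (t • γ1 + s • γ2) {y} = t * γ1 {y} + s * γ2 {y} := by
  simp [Measure.add_apply, Measure.smul_apply]

lemma convex_mem_psym {γ1 γ2 : Measure (Fin N → X)} (h1 : γ1 ∈ PsymSet N) (h2 : γ2 ∈ PsymSet N)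
    {t : ℝ≥0∞} (ht : t ≤ 1) : t • γ1 + (1 - t) • γ2 ∈ PsymSet N := by
  constructor
  · constructor
    rw [Measure.add_apply, Measure.smul_apply, Measure.smul_apply, h1.1.measure_univ,
      h2.1.measure_univ, smul_eq_mul, smul_eq_mul, mul_one, mul_one]
    exact add_tsub_cancel_of_le ht
  · apply symm_of_invariant
    intro y σ
    rw [combo_sing, combo_sing, psym_invariant h1 y σ, psym_invariant h2 y σ]

/-- the orbit of `x` as a finset -/
def orbF (x : Fin N → X) : Finset (Fin N → X) := Finset.univ.filter fun y => cnt y = cnt x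

lemma mem_orbF {x y : Fin N → X} : y ∈ orbF x ↔ cnt y = cnt x := by
  simp [orbF]

lemma orbF_card_ne_zero (x : Fin N → X) : ((orbF x).card : ℝ≥0∞) ≠ 0 := by
  have : x ∈ orbF x := mem_orbF.mpr rfl
  exact_mod_cast Nat.cast_ne_zero.mpr (Finset.card_ne_zero_of_mem this)

lemma psym_orbit_const {ρ : Measure (Fin N → X)} (hρ : ρ ∈ PsymSet N) {x y : Fin N → X}
    (hy : cnt y = cnt x) : ρ {y} = ρ {x} := by
  obtain ⟨σ, hσ⟩ := exists_perm_of_cnt_eq hy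
  rw [hσ, psym_invariant hρ y σ]

lemma psym_supported_sing {ρ : Measure (Fin N → X)} (hρ : ρ ∈ PsymSet N) {x : Fin N → X}
    (hsupp : ∀ y, cnt y ≠ cnt x → ρ {y} = 0) (y : Fin N → X) :
    ρ {y} = if cnt y = cnt x then (((orbF x).card : ℝ≥0∞))⁻¹ else 0 := by
  classical
  have htot : ((orbF x).card : ℝ≥0∞) * ρ {x} = 1 := by
    have h1 : (1 : ℝ≥0∞) = ∑ z, ρ {z} := by
      rw [← meas_univ_eq_sum, hρ.1.measure_univ]
    rw [h1, ← Finset.sum_filter_add_sum_filter_not Finset.univ (fun z => cnt z = cnt x)]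
    have e1 : ∑ z ∈ Finset.univ.filter (fun z => cnt z = cnt x), ρ {z}
        = ∑ _z ∈ orbF x, ρ {x} := by
      apply Finset.sum_congr rfl
      intro z hz
      exact psym_orbit_const hρ (mem_orbF.mp hz)
    have e2 : ∑ z ∈ Finset.univ.filter (fun z => ¬ cnt z = cnt x), ρ {z} = 0 := by
      apply Finset.sum_eq_zero
      intro z hz
      exact hsupp z (by simpa using (Finset.mem_filter.mp hz).2)
    rw [e1, e2, add_zero, Finset.sum_const, nsmul_eq_mul]
  have hval : ρ {x} = (((orbF x).card : ℝ≥0∞))⁻¹ := by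
    calc ρ {x} = (((orbF x).card : ℝ≥0∞))⁻¹ * (((orbF x).card : ℝ≥0∞) * ρ {x}) := by
          rw [← mul_assoc, ENNReal.inv_mul_cancel (orbF_card_ne_zero x) (natCast_ne_top _),
            one_mul]
    _ = (((orbF x).card : ℝ≥0∞))⁻¹ := by rw [htot, mul_one]
  by_cases hy : cnt y = cnt x
  · rw [if_pos hy, psym_orbit_const hρ hy, hval]
  · rw [if_neg hy, hsupp y hy]

lemma psym_supported_eq {x : Fin N → X} {γ γ' : Measure (Fin N → X)}
    (hγ : γ ∈ PsymSet N) (hγ' : γ' ∈ PsymSet N)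
    (h : ∀ y, cnt y ≠ cnt x → γ {y} = 0) (h' : ∀ y, cnt y ≠ cnt x → γ' {y} = 0) :
    γ = γ' := by
  apply meas_ext_sing
  intro y
  rw [psym_supported_sing hγ h y, psym_supported_sing hγ' h' y]

lemma eta_eq_of_supported {x : Fin N → X} {γ : Measure (Fin N → X)} (hγ : γ ∈ PsymSet N)
    (h : ∀ y, cnt y ≠ cnt x → γ {y} = 0) : γ = eta N x :=
  psym_supported_eq hγ (eta_mem_psym x) h (fun y hy => eta_sing_eq_zero hy)

lemma eta_sing_orbit {x y : Fin N → X} (hy : cnt y = cnt x) :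
    eta N x {y} = (((orbF x).card : ℝ≥0∞))⁻¹ := by
  rw [psym_supported_sing (eta_mem_psym x) (fun z hz => eta_sing_eq_zero hz) y, if_pos hy]

lemma decomp_s2 {γ : Measure (Fin N → X)} (hγ : γ ∈ PsymSet N) {x : Fin N → X} (hx : γ {x} ≠ 0) :
    γ = eta N x ∨ ∃ (t : ℝ≥0∞) (γ2 : Measure (Fin N → X)), γ2 ∈ PsymSet N ∧
      0 < t ∧ t < 1 ∧ γ = t • eta N x + (1 - t) • γ2 := by
  classical
  set t : ℝ≥0∞ := ∑ y ∈ orbF x, γ {y} with htdef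
  have htc : t = ((orbF x).card : ℝ≥0∞) * γ {x} := by
    rw [htdef, Finset.sum_congr rfl (fun z hz => psym_orbit_const hγ (mem_orbF.mp hz)),
      Finset.sum_const, nsmul_eq_mul]
  have hsplit : t + ∑ y ∈ Finset.univ.filter (fun z => ¬ cnt z = cnt x), γ {y} = 1 := by
    rw [htdef]
    rw [show orbF x = Finset.univ.filter (fun z => cnt z = cnt x) from rfl]
    rw [Finset.sum_filter_add_sum_filter_not Finset.univ (fun z => cnt z = cnt x),
      ← meas_univ_eq_sum, hγ.1.measure_univ]
  have ht1 : t ≤ 1 := le_trans (le_add_right le_rfl) (le_of_eq hsplit)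
  have ht0 : t ≠ 0 := by
    intro h0
    apply hx
    have hmem : x ∈ orbF x := mem_orbF.mpr rfl
    have := Finset.sum_eq_zero_iff.mp (htdef ▸ h0)
    exact this x hmem
  rcases eq_or_lt_of_le ht1 with heq | hlt
  · left
    apply eta_eq_of_supported hγ
    intro y hy
    have hrest : ∑ z ∈ Finset.univ.filter (fun z => ¬ cnt z = cnt x), γ {z} = 0 := by
      have h' : (1:ℝ≥0∞) + ∑ z ∈ Finset.univ.filter (fun z => ¬ cnt z = cnt x), γ {z} = 1 := by
        have h'' := hsplit
        rw [heq] at h''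
        exact h''
      exact (ENNReal.add_right_inj ENNReal.one_ne_top).mp (by rw [h', add_zero])
    exact Finset.sum_eq_zero_iff.mp hrest y (by simp [hy])
  · right
    set s : Set (Fin N → X) := {y | ¬ cnt y = cnt x} with hsdef
    have htne : t ≠ ∞ := ne_top_of_lt hlt
    have h1tne0 : (1 : ℝ≥0∞) - t ≠ 0 := by
      simp only [ne_eq, tsub_eq_zero_iff_le, not_le]
      exact hlt
    have h1tne : (1 : ℝ≥0∞) - t ≠ ∞ := by
      exact ne_top_of_le_ne_top ENNReal.one_ne_top tsub_le_self
    have hγs : γ s = 1 - t := by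
      have h1 : γ s = ∑ z ∈ Finset.univ.filter (fun z => ¬ cnt z = cnt x), γ {z} :=
        meas_set_eq_sum γ _
      rw [h1]
      exact ENNReal.eq_sub_of_add_eq htne (by rw [add_comm]; exact hsplit)
    set γ2 : Measure (Fin N → X) := ((1:ℝ≥0∞) - t)⁻¹ • γ.restrict s with hγ2def
    have hγ2sing : ∀ y, γ2 {y} = if cnt y = cnt x then 0 else ((1:ℝ≥0∞) - t)⁻¹ * γ {y} := by
      intro y
      rw [hγ2def, Measure.smul_apply, Measure.restrict_apply (measurableSet_singleton y),
        smul_eq_mul]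
      by_cases hy : cnt y = cnt x
      · rw [if_pos hy]
        have : ({y} : Set (Fin N → X)) ∩ s = ∅ := by
          ext z; simp only [Set.mem_inter_iff, Set.mem_singleton_iff, hsdef, Set.mem_setOf_eq,
            Set.mem_empty_iff_false, iff_false]
          rintro ⟨rfl, hz⟩; exact hz hy
        rw [this, measure_empty, mul_zero]
      · rw [if_neg hy]
        have : ({y} : Set (Fin N → X)) ∩ s = {y} := by
          ext z; simp only [Set.mem_inter_iff, Set.mem_singleton_iff, hsdef, Set.mem_setOf_eq]
          constructor
          · rintro ⟨rfl, _⟩; rfl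
          · rintro rfl; exact ⟨rfl, hy⟩
        rw [this]
    have hγ2mem : γ2 ∈ PsymSet N := by
      constructor
      · constructor
        rw [hγ2def, Measure.smul_apply, Measure.restrict_apply MeasurableSet.univ,
          Set.univ_inter, hγs, smul_eq_mul, ENNReal.inv_mul_cancel h1tne0 h1tne]
      · apply symm_of_invariant
        intro y σ
        rw [hγ2sing, hγ2sing]
        rw [show cnt (y ∘ ⇑σ) = cnt y from cnt_comp_perm y σ, psym_invariant hγ y σ]
    refine ⟨t, γ2, hγ2mem, pos_iff_ne_zero.mpr ht0, hlt, ?_⟩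
    apply meas_ext_sing
    intro y
    rw [combo_sing, hγ2sing]
    by_cases hy : cnt y = cnt x
    · rw [if_pos hy, mul_zero, add_zero, eta_sing_orbit hy, psym_orbit_const hγ hy, htc,
        mul_assoc, mul_comm (γ {x}), ← mul_assoc,
        ENNReal.mul_inv_cancel (orbF_card_ne_zero x) (natCast_ne_top _), one_mul]
    · rw [if_neg hy, eta_sing_eq_zero hy, mul_zero, zero_add, ← mul_assoc,
        ENNReal.mul_inv_cancel h1tne0 h1tne, one_mul]

lemma support_of_marg2_eq (hN : 2 ≤ N) {γ : Measure (Fin N → X)} (hγ : γ ∈ PsymSet N)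
    (x : Fin N → X) (hm : marginal hN γ = marginal hN (eta N x)) :
    ∀ y, cnt y ≠ cnt x → γ {y} = 0 := by
  classical
  haveI hPγ : IsProbabilityMeasure γ := hγ.1
  haveI hPη : IsProbabilityMeasure (eta N x) := (eta_mem_psym x).1
  set i0 : Fin N := ⟨0, by omega⟩ with hi0def
  set i1 : Fin N := ⟨1, by omega⟩ with hi1def
  have hi01 : i0 ≠ i1 := by
    intro h
    exact absurd (congrArg Fin.val h) (by simp [hi0def, hi1def])
  set w : (Fin N → X) → ℝ := fun y => (γ {y}).toReal with hwdef
  set v : (Fin N → X) → ℝ := fun y => ((eta N x) {y}).toReal with hvdef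
  have hwnn : ∀ y, 0 ≤ w y := fun y => ENNReal.toReal_nonneg
  have hsymw : ∀ (y : Fin N → X) (σ : Equiv.Perm (Fin N)), w (y ∘ ⇑σ) = w y := by
    intro y σ; rw [hwdef]; simp only; rw [psym_invariant hγ y σ]
  have hsymv : ∀ (y : Fin N → X) (σ : Equiv.Perm (Fin N)), v (y ∘ ⇑σ) = v y := by
    intro y σ; rw [hvdef]; simp only; rw [psym_invariant (eta_mem_psym x) y σ]
  have hsum : ∀ (ρ : Measure (Fin N → X)), IsProbabilityMeasure ρ →
      ∑ y, (ρ {y}).toReal = 1 := by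
    intro ρ hρ
    rw [← ENNReal.toReal_sum (fun y _ => measure_ne_top ρ {y}), ← meas_univ_eq_sum,
      hρ.measure_univ, ENNReal.toReal_one]
  have hsumw : ∑ y, w y = 1 := hsum γ hPγ
  have hsumv : ∑ y, v y = 1 := hsum (eta N x) hPη
  -- 2-point correlations
  set S2 : ((Fin N → X) → ℝ) → X → X → ℝ :=
    fun u a b => ∑ y, if y i0 = a ∧ y i1 = b then u y else 0 with hS2def
  set S1 : ((Fin N → X) → ℝ) → X → ℝ :=
    fun u a => ∑ y, if y i0 = a then u y else 0 with hS1def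
  -- marginal equality gives equality of S2
  have hS2eq : ∀ a b, S2 w a b = S2 v a b := by
    intro a b
    have hz : ∀ (ρ : Measure (Fin N → X)), IsProbabilityMeasure ρ →
        (marginal hN ρ {(![a, b] : Fin 2 → X)}).toReal
          = ∑ y, if y i0 = a ∧ y i1 = b then (ρ {y}).toReal else 0 := by
      intro ρ hρ
      rw [marginal, map_sing]
      have hpre : (fun (y : Fin N → X) (i : Fin 2) => y (Fin.castLE hN i)) ⁻¹'
          {(![a, b] : Fin 2 → X)} = {y | y i0 = a ∧ y i1 = b} := by
        ext y
        simp only [Set.mem_preimage, Set.mem_singleton_iff, Set.mem_setOf_eq, funext_iff,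
          Fin.forall_fin_two]
        constructor
        · rintro ⟨h0, h1⟩
          exact ⟨by simp at h0 ⊢; exact h0, by simp at h1 ⊢; exact h1⟩
        · rintro ⟨h0, h1⟩
          exact ⟨by simp at h0 ⊢; exact h0, by simp at h1 ⊢; exact h1⟩
      rw [hpre, meas_set_eq_sum ρ (fun y => y i0 = a ∧ y i1 = b),
        ENNReal.toReal_sum (fun y _ => measure_ne_top ρ {y}), Finset.sum_filter]
    have := congrArg (fun m => (m {(![a, b] : Fin 2 → X)}).toReal) hm
    rw [hz γ hPγ, hz (eta N x) hPη] at this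
    exact this
  -- transport lemmas
  have exists_perm : ∀ (i j : Fin N), i ≠ j → ∃ σ : Equiv.Perm (Fin N), σ i0 = i ∧ σ i1 = j := by
    intro i j hij
    set σ1 := Equiv.swap i0 i with hσ1
    set j0 := σ1 j with hj0
    have hj0i0 : j0 ≠ i0 := by
      intro h
      apply hij
      have : σ1 j0 = σ1 i0 := by rw [h]
      rw [hj0, Equiv.swap_apply_self, Equiv.swap_apply_left] at this
      exact this.symm
    refine ⟨σ1 * Equiv.swap i1 j0, ?_, ?_⟩
    · simp only [Equiv.Perm.mul_apply]
      rw [Equiv.swap_apply_of_ne_of_ne hi01 (Ne.symm hj0i0), Equiv.swap_apply_left]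
    · simp only [Equiv.Perm.mul_apply]
      rw [Equiv.swap_apply_left, hj0, Equiv.swap_apply_self]
  have transport2 : ∀ (u : (Fin N → X) → ℝ), (∀ (y : Fin N → X) (σ : Equiv.Perm (Fin N)), u (y ∘ ⇑σ) = u y) →
      ∀ (i j : Fin N), i ≠ j → ∀ a b,
      (∑ y, if y i = a ∧ y j = b then u y else 0) = S2 u a b := by
    intro u hu i j hij a b
    obtain ⟨σ, hσ0, hσ1⟩ := exists_perm i j hij
    rw [hS2def]
    simp only
    rw [← Equiv.sum_comp (Equiv.arrowCongr σ.symm (Equiv.refl X))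
      (fun y => if y i0 = a ∧ y i1 = b then u y else 0)]
    apply Finset.sum_congr rfl
    intro y _
    have he : (Equiv.arrowCongr σ.symm (Equiv.refl X)) y = y ∘ ⇑σ := rfl
    rw [he]
    simp only [Function.comp_apply, hσ0, hσ1, hu y σ]
  have transport1 : ∀ (u : (Fin N → X) → ℝ), (∀ (y : Fin N → X) (σ : Equiv.Perm (Fin N)), u (y ∘ ⇑σ) = u y) →
      ∀ (i : Fin N) (a : X),
      (∑ y, if y i = a then u y else 0) = S1 u a := by
    intro u hu i a
    set σ := Equiv.swap i0 i with hσ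
    rw [hS1def]
    simp only
    rw [← Equiv.sum_comp (Equiv.arrowCongr σ.symm (Equiv.refl X))
      (fun y => if y i0 = a then u y else 0)]
    apply Finset.sum_congr rfl
    intro y _
    have he : (Equiv.arrowCongr σ.symm (Equiv.refl X)) y = y ∘ ⇑σ := rfl
    rw [he]
    simp only [Function.comp_apply, hσ, Equiv.swap_apply_left, hu]
  have hS1S2 : ∀ u a, S1 u a = ∑ b, S2 u a b := by
    intro u a
    rw [hS1def, hS2def]
    simp only
    rw [Finset.sum_comm]
    apply Finset.sum_congr rfl
    intro y _
    by_cases h : y i0 = a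
    · simp [h, Finset.sum_ite_eq]
    · simp [h]
  have hS1eq : ∀ a, S1 w a = S1 v a := by
    intro a
    rw [hS1S2, hS1S2]
    exact Finset.sum_congr rfl fun b _ => hS2eq a b
  -- counting function as a sum of indicators
  have hcnt : ∀ (y : Fin N → X) (a : X),
      (cnt y a : ℝ) = ∑ i, if y i = a then (1:ℝ) else 0 := by
    intro y a
    rw [cnt, Finset.card_filter]
    push_cast
    rfl
  set c : X → ℝ := fun a => (cnt x a : ℝ) with hcdef
  set D : (Fin N → X) → ℝ := fun y => ∑ a, ((cnt y a : ℝ) - c a)^2 with hDdef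
  -- first moment identity
  have momA : ∀ u : ((Fin N → X) → ℝ), (∀ (y : Fin N → X) (σ : Equiv.Perm (Fin N)), u (y ∘ ⇑σ) = u y) → ∀ a,
      ∑ y, u y * (cnt y a : ℝ) = (N:ℝ) * S1 u a := by
    intro u hu a
    have : ∀ y : Fin N → X, u y * (cnt y a : ℝ) = ∑ i, if y i = a then u y else 0 := by
      intro y
      rw [hcnt, Finset.mul_sum]
      exact Finset.sum_congr rfl fun i _ => by rw [mul_ite, mul_one, mul_zero]
    rw [Finset.sum_congr rfl fun y _ => this y, Finset.sum_comm,
      Finset.sum_congr rfl fun i _ => transport1 u hu i a, Finset.sum_const,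
      Finset.card_univ, Fintype.card_fin, nsmul_eq_mul]
  -- second moment identity
  have momB : ∀ u : ((Fin N → X) → ℝ), (∀ (y : Fin N → X) (σ : Equiv.Perm (Fin N)), u (y ∘ ⇑σ) = u y) → ∀ a,
      ∑ y, u y * (cnt y a : ℝ)^2
        = (N:ℝ) * S1 u a + ((N:ℝ)^2 - N) * S2 u a a := by
    intro u hu a
    have step1 : ∀ y : Fin N → X, u y * (cnt y a : ℝ)^2
        = ∑ i, ∑ j, if y i = a ∧ y j = a then u y else 0 := by
      intro y
      rw [hcnt, sq, Finset.sum_mul_sum]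
      rw [Finset.mul_sum]
      apply Finset.sum_congr rfl
      intro i _
      rw [Finset.mul_sum]
      apply Finset.sum_congr rfl
      intro j _
      by_cases h1 : y i = a <;> by_cases h2 : y j = a <;> simp [h1, h2]
    rw [Finset.sum_congr rfl fun y _ => step1 y, Finset.sum_comm]
    have step2 : ∀ i : Fin N, ∑ y : Fin N → X, ∑ j, (if y i = a ∧ y j = a then u y else 0)
        = ∑ j, if i = j then S1 u a else S2 u a a := by
      intro i
      rw [Finset.sum_comm]
      apply Finset.sum_congr rfl
      intro j _
      by_cases hij : i = j
      · rw [if_pos hij, ← hij, ← transport1 u hu i a]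
        exact Finset.sum_congr rfl fun y _ => by
          by_cases h : y i = a <;> simp [h]
      · rw [if_neg hij, ← transport2 u hu i j hij a a]
    rw [Finset.sum_congr rfl fun i _ => step2 i]
    have step3 : ∀ i : Fin N, ∑ j, (if i = j then S1 u a else S2 u a a)
        = (N:ℝ) * S2 u a a + (S1 u a - S2 u a a) := by
      intro i
      have : ∀ j : Fin N, (if i = j then S1 u a else S2 u a a)
          = S2 u a a + (if i = j then S1 u a - S2 u a a else 0) := by
        intro j
        by_cases h : i = j <;> simp [h]
      rw [Finset.sum_congr rfl fun j _ => this j, Finset.sum_add_distrib, Finset.sum_const,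
        Finset.card_univ, Fintype.card_fin, nsmul_eq_mul, Finset.sum_ite_eq, if_pos
        (Finset.mem_univ i)]
    rw [Finset.sum_congr rfl fun i _ => step3 i, Finset.sum_const, Finset.card_univ,
      Fintype.card_fin, nsmul_eq_mul]
    ring
  -- full expansion of the quadratic functional
  have expand : ∀ u : ((Fin N → X) → ℝ), (∀ (y : Fin N → X) (σ : Equiv.Perm (Fin N)), u (y ∘ ⇑σ) = u y) → (∑ y, u y = 1) →
      ∑ y, u y * D y = ∑ a, (((N:ℝ)^2 - N) * S2 u a a + (N:ℝ) * S1 u a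
        - 2 * c a * ((N:ℝ) * S1 u a) + c a ^ 2) := by
    intro u hu husum
    have step1 : ∀ y, u y * D y
        = ∑ a, (u y * (cnt y a : ℝ)^2 - 2 * c a * (u y * (cnt y a : ℝ)) + c a^2 * u y) := by
      intro y
      rw [hDdef]
      simp only
      rw [Finset.mul_sum]
      exact Finset.sum_congr rfl fun a _ => by ring
    rw [Finset.sum_congr rfl fun y _ => step1 y, Finset.sum_comm]
    apply Finset.sum_congr rfl
    intro a _
    rw [Finset.sum_add_distrib, Finset.sum_sub_distrib, momB u hu a]
    rw [← Finset.mul_sum, momA u hu a, ← Finset.mul_sum, husum, mul_one]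
    ring
  -- Q is the same for w and v
  have hQeq : ∑ y, w y * D y = ∑ y, v y * D y := by
    rw [expand w hsymw hsumw, expand v hsymv hsumv]
    exact Finset.sum_congr rfl fun a _ => by rw [hS2eq, hS1eq]
  -- Q v = 0
  have hQv : ∑ y, v y * D y = 0 := by
    apply Finset.sum_eq_zero
    intro y _
    by_cases hv : v y = 0
    · rw [hv, zero_mul]
    · have hcv : cnt y = cnt x := by
        by_contra h
        exact hv (by rw [hvdef]; simp only; rw [eta_sing_eq_zero h, ENNReal.toReal_zero])
      have : D y = 0 := by
        rw [hDdef]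
        simp only
        apply Finset.sum_eq_zero
        intro a _
        rw [hcdef]
        simp only
        rw [hcv]
        ring
      rw [this, mul_zero]
  -- conclude
  intro y hy
  have hterm : w y * D y = 0 := by
    have h0 : ∑ z, w z * D z = 0 := by rw [hQeq, hQv]
    have hnn : ∀ z ∈ Finset.univ, 0 ≤ w z * D z := by
      intro z _
      apply mul_nonneg (hwnn z)
      rw [hDdef]
      exact Finset.sum_nonneg fun a _ => sq_nonneg _
    exact (Finset.sum_eq_zero_iff_of_nonneg hnn).mp h0 y (Finset.mem_univ y)
  have hD : D y ≠ 0 := by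
    obtain ⟨a, ha⟩ := Function.ne_iff.mp hy
    have hne : ((cnt y a : ℝ)) - c a ≠ 0 := by
      show (cnt y a : ℝ) - (cnt x a : ℝ) ≠ 0
      exact sub_ne_zero.mpr (by exact_mod_cast ha)
    have h1 : 0 < ((cnt y a : ℝ) - c a)^2 := pow_two_pos_of_ne_zero hne
    intro h0
    have hle : ((cnt y a : ℝ) - c a)^2 ≤ D y := by
      rw [hDdef]
      exact Finset.single_le_sum (f := fun b => ((cnt y b : ℝ) - c b)^2)
        (fun b _ => sq_nonneg _) (Finset.mem_univ a)
    rw [h0] at hle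
    linarith
  have hw0 : w y = 0 := by
    rcases mul_eq_zero.mp hterm with h | h
    · exact h
    · exact absurd h hD
  rcases ENNReal.toReal_eq_zero_iff _ |>.mp hw0 with h | h
  · exact h
  · exact absurd h (measure_ne_top γ {y})

end Symm

section End
variable {X : Type*} [Fintype X] [DecidableEq X] [MeasurableSpace X]
  [MeasurableSingletonClass X] {k N : ℕ}

lemma exists_pos_sing (γ : Measure (Fin N → X)) [hP : IsProbabilityMeasure γ] :
    ∃ x, γ {x} ≠ 0 := by
  by_contra h
  push_neg at h
  have : γ Set.univ = 0 := by
    rw [meas_univ_eq_sum]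
    exact Finset.sum_eq_zero fun y _ => h y
  rw [hP.measure_univ] at this
  exact one_ne_zero this

lemma marg_eq_imp_eta (hk : 2 ≤ k) (hkN : k ≤ N) {γ : Measure (Fin N → X)}
    (hγ : γ ∈ PsymSet N) {x : Fin N → X}
    (hm : marginal hkN γ = marginal hkN (eta N x)) : γ = eta N x := by
  have h2N : 2 ≤ N := hk.trans hkN
  have h2 : marginal h2N γ = marginal h2N (eta N x) := by
    rw [← marginal_comp hk hkN γ, ← marginal_comp hk hkN (eta N x), hm]
  exact eta_eq_of_supported hγ (support_of_marg2_eq h2N hγ x h2)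

lemma eta_extreme_psym (x : Fin N → X) : IsExtremePt (PsymSet N) (eta N x) := by
  refine ⟨eta_mem_psym x, ?_⟩
  intro μ1 h1 μ2 h2 t ht0 ht1 hcomb
  have ht0' : t ≠ 0 := ht0.ne'
  have h1t0' : (1:ℝ≥0∞) - t ≠ 0 := by
    simp only [ne_eq, tsub_eq_zero_iff_le, not_le]; exact ht1
  have hsupp : ∀ y, cnt y ≠ cnt x → μ1 {y} = 0 ∧ μ2 {y} = 0 := by
    intro y hy
    have h0 : t * μ1 {y} + (1 - t) * μ2 {y} = 0 := by
      rw [← combo_sing, ← hcomb]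
      exact eta_sing_eq_zero hy
    rcases add_eq_zero.mp h0 with ⟨ha, hb⟩
    exact ⟨by simpa [ht0'] using mul_eq_zero.mp ha,
      by simpa [h1t0'] using mul_eq_zero.mp hb⟩
  exact ⟨eta_eq_of_supported h1 (fun y hy => (hsupp y hy).1),
    eta_eq_of_supported h2 (fun y hy => (hsupp y hy).2)⟩

lemma psym_extreme_iff (γ : Measure (Fin N → X)) :
    IsExtremePt (PsymSet N) γ ↔ ∃ x, γ = eta N x := by
  constructor
  · intro hext
    haveI : IsProbabilityMeasure γ := hext.1.1
    obtain ⟨x, hx⟩ := exists_pos_sing γ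
    rcases decomp_s2 hext.1 hx with h | ⟨t, γ2, hγ2, ht0, ht1, hcomb⟩
    · exact ⟨x, h⟩
    · exact ⟨x, ((hext.2 (eta N x) (eta_mem_psym x) γ2 hγ2 t ht0 ht1 hcomb).1).symm⟩
  · rintro ⟨x, rfl⟩
    exact eta_extreme_psym x

lemma marg_eta_extreme (hk : 2 ≤ k) (hkN : k ≤ N) (x : Fin N → X) :
    IsExtremePt (NRep hkN) (marginal hkN (eta N x)) := by
  refine ⟨⟨eta N x, eta_mem_psym x, rfl⟩, ?_⟩
  rintro μ1 ⟨γ1, hγ1, rfl⟩ μ2 ⟨γ2, hγ2, rfl⟩ t ht0 ht1 hcomb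
  have ht0' : t ≠ 0 := ht0.ne'
  have h1t0' : (1:ℝ≥0∞) - t ≠ 0 := by
    simp only [ne_eq, tsub_eq_zero_iff_le, not_le]; exact ht1
  set γ : Measure (Fin N → X) := t • γ1 + (1 - t) • γ2 with hγdef
  have hγmem : γ ∈ PsymSet N := convex_mem_psym hγ1 hγ2 ht1.le
  have hmarg : marginal hkN γ = marginal hkN (eta N x) := by
    rw [hγdef, marginal_convex, ← hcomb]
  have hγeta : γ = eta N x := marg_eq_imp_eta hk hkN hγmem hmarg
  have hsupp : ∀ y, cnt y ≠ cnt x → γ1 {y} = 0 ∧ γ2 {y} = 0 := by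
    intro y hy
    have h0 : t * γ1 {y} + (1 - t) * γ2 {y} = 0 := by
      rw [← combo_sing, ← hγdef, hγeta]
      exact eta_sing_eq_zero hy
    rcases add_eq_zero.mp h0 with ⟨ha, hb⟩
    exact ⟨by simpa [ht0'] using mul_eq_zero.mp ha,
      by simpa [h1t0'] using mul_eq_zero.mp hb⟩
  have e1 : γ1 = eta N x := eta_eq_of_supported hγ1 (fun y hy => (hsupp y hy).1)
  have e2 : γ2 = eta N x := eta_eq_of_supported hγ2 (fun y hy => (hsupp y hy).2)
  exact ⟨by rw [e1], by rw [e2]⟩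

lemma nrep_extreme_iff (hk : 2 ≤ k) (hkN : k ≤ N) (μ : Measure (Fin k → X)) :
    IsExtremePt (NRep (X := X) hkN) μ ↔ ∃ x : Fin N → X, μ = marginal hkN (eta N x) := by
  constructor
  · intro hext
    obtain ⟨γ, hγ, rfl⟩ := hext.1
    haveI : IsProbabilityMeasure γ := hγ.1
    obtain ⟨x, hx⟩ := exists_pos_sing γ
    rcases decomp_s2 hγ hx with h | ⟨t, γ2, hγ2, ht0, ht1, hcomb⟩
    · exact ⟨x, by rw [h]⟩
    · refine ⟨x, ?_⟩
      have hcomb' : marginal hkN γ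
          = t • marginal hkN (eta N x) + (1 - t) • marginal hkN γ2 := by
        rw [hcomb, marginal_convex]
      exact ((hext.2 (marginal hkN (eta N x)) ⟨eta N x, eta_mem_psym x, rfl⟩
        (marginal hkN γ2) ⟨γ2, hγ2, rfl⟩ t ht0 ht1 hcomb').1).symm
  · rintro ⟨x, rfl⟩
    exact marg_eta_extreme hk hkN x

lemma exists_monotone_eta {ℓ : ℕ} (a : Fin ℓ ≃ X) (x : Fin N → X) :
    ∃ i : Fin N → Fin ℓ, Monotone i ∧ eta N x = eta N (fun j => a (i j)) := by
  set σ := Tuple.sort (⇑a.symm ∘ x) with hσ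
  refine ⟨(⇑a.symm ∘ x) ∘ ⇑σ, Tuple.monotone_sort _, ?_⟩
  have hx : (fun j => a (((⇑a.symm ∘ x) ∘ ⇑σ) j)) = x ∘ ⇑σ := by
    funext j
    simp
  rw [hx, eta_comp_perm]
end End


/-- On a finite state space `X = {a_1,…,a_ℓ}` and for `2 ≤ k ≤ N`:
a measure `μ` on `X^k` is an extreme point of `𝒫_{N-rep}(X^k)` iff it has the form
`M_k S_N δ_{(a_{i_1},…,a_{i_N})}` for some `1 ≤ i_1 ≤ … ≤ i_N ≤ ℓ`; moreover `M_k` restricts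
to a bijection from the extreme points of `𝒫_sym(X^N)` onto those of `𝒫_{N-rep}(X^k)`. -/
theorem extreme_points_finite_state
    {X : Type*} [Fintype X] [DecidableEq X] [MeasurableSpace X] [MeasurableSingletonClass X]
    {ℓ k N : ℕ} (a : Fin ℓ ≃ X) (hk : 2 ≤ k) (hkN : k ≤ N) :
    (∀ μ : Measure (Fin k → X),
      IsExtremePt (NRep (X := X) hkN) μ ↔
        ∃ i : Fin N → Fin ℓ, Monotone i ∧
          μ = marginal hkN (symmetrize N (Measure.dirac (fun j => a (i j))))) ∧
    Set.BijOn (marginal (X := X) hkN)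
      {γ | IsExtremePt (PsymSet (X := X) N) γ}
      {μ | IsExtremePt (NRep (X := X) hkN) μ} := by
  constructor
  · intro μ
    rw [nrep_extreme_iff hk hkN μ]
    constructor
    · rintro ⟨x, rfl⟩
      obtain ⟨i, hmono, heq⟩ := exists_monotone_eta a x
      exact ⟨i, hmono, by rw [heq]; rfl⟩
    · rintro ⟨i, hmono, rfl⟩
      exact ⟨fun j => a (i j), rfl⟩
  · refine ⟨?_, ?_, ?_⟩
    · intro γ hγ
      obtain ⟨x, rfl⟩ := (psym_extreme_iff γ).mp hγ
      exact marg_eta_extreme hk hkN x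
    · intro γ hγ γ' hγ' hm
      obtain ⟨x, rfl⟩ := (psym_extreme_iff γ).mp hγ
      obtain ⟨x', rfl⟩ := (psym_extreme_iff γ').mp hγ'
      exact marg_eq_imp_eta hk hkN (eta_mem_psym x) hm
    · intro μ hμ
      obtain ⟨x, rfl⟩ := (nrep_extreme_iff hk hkN μ).mp hμ
      exact ⟨eta N x, (psym_extreme_iff _).mpr ⟨x, rfl⟩, rfl⟩

end FiniteDeFinetti
end
end

section
/- Let X be a Polish space, N ≥ 2, and fix (x_1,…,x_N) ∈ X^N. For k = 1,…,N let μ_k := M_k S_N δ_{(x_1,…,x_N)} and let λ := (1/N) Σ_{i=1}^N δ_{x_i}. Then for every k = 1,…,N−1 one has the recursion μ_{k+1} = (N/(N−k)) · μ_k ⊗ λ − (1/(N−k)) Σ_{j=1}^k (R_j)_# μ_k, where R_j : X^k → X^{k+1} is the map R_j(z_1,…,z_k) := (z_1,…,z_k,z_j) and (R_j)_# denotes pushforward. -/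
open MeasureTheory Filter Topology ENNReal

noncomputable section

namespace FiniteDeFinetti

variable {X : Type*}

section AuxRecursion

lemma map_finset_sum'' {α β ι : Type*} [MeasurableSpace α] [MeasurableSpace β]
    (s : Finset ι) (μ : ι → Measure α) {g : α → β} (hg : Measurable g) :
    (∑ i ∈ s, μ i).map g = ∑ i ∈ s, (μ i).map g := by
  ext t ht
  rw [Measure.map_apply hg ht, Measure.finset_sum_apply, Measure.finset_sum_apply]
  exact Finset.sum_congr rfl fun i _ => (Measure.map_apply hg ht).symm

lemma measurable_snocMap {Y : Type*} [MeasurableSpace Y] {k : ℕ} :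
    Measurable (fun p : (Fin k → Y) × Y => (Fin.snoc p.1 p.2 : Fin (k + 1) → Y)) := by
  apply measurable_pi_lambda
  intro i
  induction i using Fin.lastCases with
  | last => simpa using measurable_snd
  | cast j => simpa using (show Measurable fun c : (Fin k → Y) × Y => c.1 j from
      (measurable_pi_apply j).comp measurable_fst)

lemma toReal_combo {ι : Type*} [Fintype ι] (c : ℕ) (f : ι → ℝ≥0∞) (hf : ∀ σ, f σ ≠ ⊤) :
    (((c : ℝ≥0∞))⁻¹ * ∑ σ : ι, f σ).toReal = (c : ℝ)⁻¹ * ∑ σ : ι, (f σ).toReal := by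
  rw [ENNReal.toReal_mul, ENNReal.toReal_inv, ENNReal.toReal_natCast,
    ENNReal.toReal_sum (fun a _ => hf a)]

open Classical in
lemma combo_apply {Y ι : Type*} [MeasurableSpace Y] [Fintype ι] (c : ℕ)
    (g : ι → Y) {A : Set Y} (hA : MeasurableSet A) :
    ((((c : ℝ≥0∞))⁻¹ • ∑ σ : ι, Measure.dirac (g σ)) A).toReal
      = (c : ℝ)⁻¹ * ∑ σ : ι, (if g σ ∈ A then (1 : ℝ) else 0) := by
  rw [Measure.smul_apply, Measure.finset_sum_apply, smul_eq_mul, toReal_combo]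
  · congr 1
    refine Finset.sum_congr rfl fun σ _ => ?_
    rw [Measure.dirac_apply' _ hA, Set.indicator_apply]
    by_cases h : g σ ∈ A <;> simp [h]
  · intro σ
    rw [Measure.dirac_apply' _ hA, Set.indicator_apply]
    split_ifs <;> simp

/-- The first `k` coordinates of `x ∘ σ`. -/
def zp {X : Type*} {N k : ℕ} (h : k ≤ N) (x : Fin N → X) (σ : Equiv.Perm (Fin N)) :
    Fin k → X :=
  fun i => x (σ (Fin.castLE h i))

open Classical in
/-- Indicator of `A` at `(x_{σ(1)},…,x_{σ(k)}, x_m)`. -/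
def rp {X : Type*} {N k : ℕ} (h : k < N) (x : Fin N → X) (A : Set (Fin (k + 1) → X))
    (σ : Equiv.Perm (Fin N)) (m : Fin N) : ℝ :=
  if Fin.snoc (zp h.le x σ) (x m) ∈ A then 1 else 0

lemma key_sum {X : Type*} {N k : ℕ} (hkN : k < N) (x : Fin N → X)
    (A : Set (Fin (k + 1) → X)) :
    ∑ σ : Equiv.Perm (Fin N), ∑ i : Fin N, rp hkN x A σ i
      = (∑ j : Fin k, ∑ σ : Equiv.Perm (Fin N), rp hkN x A σ (σ (Fin.castLE hkN.le j)))
        + ((N : ℝ) - (k : ℝ)) * ∑ σ : Equiv.Perm (Fin N), rp hkN x A σ (σ ⟨k, hkN⟩) := by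
  classical
  have h1 : ∀ σ : Equiv.Perm (Fin N), ∑ i : Fin N, rp hkN x A σ i
      = ∑ i : Fin N, rp hkN x A σ (σ i) :=
    fun σ => (Equiv.sum_comp σ (rp hkN x A σ)).symm
  rw [Finset.sum_congr rfl fun σ _ => h1 σ, Finset.sum_comm,
    ← Finset.sum_filter_add_sum_filter_not Finset.univ (fun i : Fin N => (i : ℕ) < k)]
  have hswap : ∀ i : Fin N, ¬ ((i : ℕ) < k) →
      ∑ σ : Equiv.Perm (Fin N), rp hkN x A σ (σ i)
        = ∑ σ : Equiv.Perm (Fin N), rp hkN x A σ (σ ⟨k, hkN⟩) := by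
    intro i hi
    have hb := Equiv.sum_comp (Equiv.mulRight (Equiv.swap i (⟨k, hkN⟩ : Fin N)))
      (fun σ : Equiv.Perm (Fin N) => rp hkN x A σ (σ i))
    rw [← hb]
    refine Finset.sum_congr rfl fun σ _ => ?_
    have hz : zp hkN.le x (σ * Equiv.swap i (⟨k, hkN⟩ : Fin N)) = zp hkN.le x σ := by
      funext j
      show x ((σ * Equiv.swap i (⟨k, hkN⟩ : Fin N)) (Fin.castLE hkN.le j))
        = x (σ (Fin.castLE hkN.le j))
      have h1 : (Fin.castLE hkN.le j : Fin N) ≠ i := by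
        intro h
        have := congrArg Fin.val h
        simp only [Fin.coe_castLE] at this
        have hjk := j.isLt
        omega
      have h2 : (Fin.castLE hkN.le j : Fin N) ≠ ⟨k, hkN⟩ := by
        intro h
        have := congrArg Fin.val h
        simp only [Fin.coe_castLE] at this
        have hjk := j.isLt
        omega
      rw [Equiv.Perm.mul_apply, Equiv.swap_apply_of_ne_of_ne h1 h2]
    have happ : (σ * Equiv.swap i (⟨k, hkN⟩ : Fin N)) i = σ ⟨k, hkN⟩ := by
      rw [Equiv.Perm.mul_apply, Equiv.swap_apply_left]
    show rp hkN x A (σ * Equiv.swap i (⟨k, hkN⟩ : Fin N))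
        ((σ * Equiv.swap i (⟨k, hkN⟩ : Fin N)) i) = rp hkN x A σ (σ ⟨k, hkN⟩)
    unfold rp
    rw [hz, happ]
  congr 1
  · refine Finset.sum_bij'
      (fun (i : Fin N) (hi : i ∈ Finset.univ.filter fun i : Fin N => (i : ℕ) < k) =>
        (⟨(i : ℕ), (Finset.mem_filter.mp hi).2⟩ : Fin k))
      (fun (j : Fin k) _ => Fin.castLE hkN.le j) ?_ ?_ ?_ ?_ ?_
    · intro a ha; exact Finset.mem_univ _
    · intro j _
      simp only [Finset.mem_filter, Finset.mem_univ, true_and, Fin.coe_castLE]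
      exact j.isLt
    · intro a ha; rfl
    · intro j _; rfl
    · intro a ha; rfl
  · rw [Finset.sum_congr rfl fun i hi => hswap i (Finset.mem_filter.mp hi).2,
      Finset.sum_const]
    have hcard : (Finset.univ.filter fun i : Fin N => ¬ ((i : ℕ) < k)).card = N - k := by
      have hadd := Finset.card_filter_add_card_filter_not
        (s := Finset.univ) (p := fun i : Fin N => (i : ℕ) < k)
      have hck : (Finset.univ.filter fun i : Fin N => ((i : ℕ) < k)).card = k := by
        rw [Finset.card_bij' (fun (i : Fin N)
            (hi : i ∈ Finset.univ.filter fun i : Fin N => (i : ℕ) < k) =>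
              (⟨(i : ℕ), (Finset.mem_filter.mp hi).2⟩ : Fin k))
          (fun (j : Fin k) _ => Fin.castLE hkN.le j)
          (fun a ha => Finset.mem_univ _)
          (fun j _ => by
            simp only [Finset.mem_filter, Finset.mem_univ, true_and, Fin.coe_castLE]
            exact j.isLt)
          (fun a ha => rfl) (fun j _ => rfl)]
        simp
      have huniv : (Finset.univ : Finset (Fin N)).card = N := by simp
      omega
    rw [hcard, nsmul_eq_mul, Nat.cast_sub hkN.le]

end AuxRecursion

set_option maxHeartbeats 1000000 in
/-- Recursion for the marginals `μ_k = M_k S_N δ_{(x_1,…,x_N)}`: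
`μ_{k+1} = (N/(N−k)) μ_k ⊗ λ − (1/(N−k)) ∑_{j=1}^k (R_j)_# μ_k` with
`λ = (1/N) ∑ δ_{x_i}` and `R_j(z_1,…,z_k) = (z_1,…,z_k,z_j)`; the identity of signed
measures is tested on all Borel sets. -/
theorem marginal_recursion
    {X : Type*} [MeasurableSpace X] [TopologicalSpace X] [PolishSpace X] [BorelSpace X]
    {N : ℕ} (hN : 2 ≤ N) (x : Fin N → X) {k : ℕ} (hk1 : 1 ≤ k) (hkN : k < N) :
    ∀ A : Set (Fin (k + 1) → X), MeasurableSet A →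
      ((marginal (X := X) (show k + 1 ≤ N from hkN) (symmetrize N (Measure.dirac x))) A).toReal
        = (N : ℝ) / ((N : ℝ) - (k : ℝ)) *
            ((((marginal (X := X) hkN.le (symmetrize N (Measure.dirac x))).prod
                (empirical N x)).map (fun p => Fin.snoc p.1 p.2)) A).toReal
          - ((N : ℝ) - (k : ℝ))⁻¹ *
            ∑ j : Fin k, (((marginal (X := X) hkN.le
                (symmetrize N (Measure.dirac x))).map
                  (fun z => Fin.snoc z (z j))) A).toReal := by
  intro A hA
  classical
  have hN0 : 0 < N := by omega
  have hperm : ∀ σ : Equiv.Perm (Fin N),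
      Measurable (fun y : Fin N → X => fun i => y (σ i)) :=
    fun σ => measurable_pi_lambda _ fun i => measurable_pi_apply _
  have hproj : ∀ {m : ℕ} (h : m ≤ N),
      Measurable (fun y : Fin N → X => fun i : Fin m => y (Fin.castLE h i)) :=
    fun h => measurable_pi_lambda _ fun i => measurable_pi_apply _
  have hsymm : symmetrize N (Measure.dirac x)
      = (N.factorial : ℝ≥0∞)⁻¹ •
          ∑ σ : Equiv.Perm (Fin N), Measure.dirac (fun i => x (σ i)) := by
    unfold symmetrize
    congr 1
    exact Finset.sum_congr rfl fun σ _ => Measure.map_dirac' (hperm σ) x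
  have hmarg : ∀ {m : ℕ} (h : m ≤ N),
      marginal h (symmetrize N (Measure.dirac x))
        = (N.factorial : ℝ≥0∞)⁻¹ •
            ∑ σ : Equiv.Perm (Fin N), Measure.dirac (zp h x σ) := by
    intro m h
    unfold marginal
    rw [hsymm, Measure.map_smul, map_finset_sum'' _ _ (hproj h)]
    congr 1
    exact Finset.sum_congr rfl fun σ _ => Measure.map_dirac' (hproj h) _
  -- LHS
  have hzsnoc : ∀ σ : Equiv.Perm (Fin N),
      zp (show k + 1 ≤ N from hkN) x σ
        = Fin.snoc (zp hkN.le x σ) (x (σ ⟨k, hkN⟩)) := by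
    intro σ
    funext i
    induction i using Fin.lastCases with
    | last => rw [Fin.snoc_last]; rfl
    | cast j => rw [Fin.snoc_castSucc]; rfl
  have hL : ((marginal (show k + 1 ≤ N from hkN) (symmetrize N (Measure.dirac x))) A).toReal
      = (N.factorial : ℝ)⁻¹ * ∑ σ : Equiv.Perm (Fin N), rp hkN x A σ (σ ⟨k, hkN⟩) := by
    rw [hmarg (show k + 1 ≤ N from hkN)]
    simp only [hzsnoc]
    exact combo_apply N.factorial _ hA
  -- R_j terms
  have hR : ∀ j : Fin k,
      (((marginal hkN.le (symmetrize N (Measure.dirac x))).map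
          (fun z => Fin.snoc z (z j))) A).toReal
        = (N.factorial : ℝ)⁻¹ *
            ∑ σ : Equiv.Perm (Fin N), rp hkN x A σ (σ (Fin.castLE hkN.le j)) := by
    intro j
    have hmeas : Measurable fun zz : Fin k → X => (Fin.snoc zz (zz j) : Fin (k + 1) → X) :=
      measurable_snocMap.comp (measurable_id.prodMk (measurable_pi_apply j))
    rw [hmarg hkN.le, Measure.map_smul, map_finset_sum'' _ _ hmeas]
    have hd : ∀ σ : Equiv.Perm (Fin N),
        (Measure.dirac (zp hkN.le x σ)).map (fun zz => Fin.snoc zz (zz j))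
          = Measure.dirac (Fin.snoc (zp hkN.le x σ) (x (σ (Fin.castLE hkN.le j))) : Fin (k+1) → X) :=
      fun σ => Measure.map_dirac' hmeas _
    simp only [hd]
    exact combo_apply N.factorial _ hA
  -- product term
  haveI hlam : IsProbabilityMeasure (empirical N x) := empirical_isProbabilityMeasure hN0 x
  have hT2 : ((((marginal hkN.le (symmetrize N (Measure.dirac x))).prod (empirical N x)).map
        (fun p => Fin.snoc p.1 p.2)) A).toReal
      = (N.factorial : ℝ)⁻¹ *
          ∑ σ : Equiv.Perm (Fin N), ((N : ℝ)⁻¹ * ∑ i : Fin N, rp hkN x A σ i) := by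
    rw [Measure.map_apply measurable_snocMap hA,
      Measure.prod_apply (measurable_snocMap hA), hmarg hkN.le,
      lintegral_smul_measure, lintegral_finset_sum_measure]
    have hfm : Measurable fun zz : Fin k → X =>
        empirical N x (Prod.mk zz ⁻¹'
          ((fun p : (Fin k → X) × X => (Fin.snoc p.1 p.2 : Fin (k + 1) → X)) ⁻¹' A)) :=
      measurable_measure_prodMk_left (measurable_snocMap hA)
    rw [Finset.sum_congr rfl fun σ _ => lintegral_dirac' _ hfm]
    have hemp : ∀ σ : Equiv.Perm (Fin N),
        empirical N x (Prod.mk (zp hkN.le x σ) ⁻¹'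
            ((fun p : (Fin k → X) × X => (Fin.snoc p.1 p.2 : Fin (k + 1) → X)) ⁻¹' A))
          = (N : ℝ≥0∞)⁻¹ *
              ∑ i : Fin N, Set.indicator A 1 (Fin.snoc (zp hkN.le x σ) (x i)) := by
      intro σ
      have hAσ : MeasurableSet (Prod.mk (zp hkN.le x σ) ⁻¹'
          ((fun p : (Fin k → X) × X => (Fin.snoc p.1 p.2 : Fin (k + 1) → X)) ⁻¹' A)) :=
        measurable_prodMk_left (measurable_snocMap hA)
      unfold empirical
      rw [Measure.smul_apply, Measure.finset_sum_apply, smul_eq_mul]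
      congr 1
      refine Finset.sum_congr rfl fun i _ => ?_
      rw [Measure.dirac_apply' _ hAσ]
      rfl
    rw [Finset.sum_congr rfl fun σ _ => hemp σ]
    have hindne : ∀ (y : Fin (k + 1) → X),
        Set.indicator A (1 : (Fin (k + 1) → X) → ℝ≥0∞) y ≠ ⊤ := by
      intro y
      rw [Set.indicator_apply]
      split_ifs <;> simp
    rw [smul_eq_mul, toReal_combo]
    · refine congrArg _ (Finset.sum_congr rfl fun σ _ => ?_)
      rw [toReal_combo]
      · refine congrArg _ (Finset.sum_congr rfl fun i _ => ?_)
        rw [Set.indicator_apply, apply_ite ENNReal.toReal]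
        simp [rp]
      · intro i
        exact hindne _
    · intro σ
      refine ENNReal.mul_ne_top ?_ ?_
      · exact ENNReal.inv_ne_top.mpr (by exact_mod_cast hN0.ne')
      · exact (ENNReal.sum_lt_top.mpr (fun i _ => (hindne _).lt_top)).ne
  rw [hL, hT2]
  simp only [hR]
  have e1 : ∑ σ : Equiv.Perm (Fin N), ((N : ℝ)⁻¹ * ∑ i : Fin N, rp hkN x A σ i)
      = (N : ℝ)⁻¹ * ∑ σ : Equiv.Perm (Fin N), ∑ i : Fin N, rp hkN x A σ i :=
    (Finset.mul_sum _ _ _).symm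
  have e2 : ∑ j : Fin k, ((N.factorial : ℝ)⁻¹ *
        ∑ σ : Equiv.Perm (Fin N), rp hkN x A σ (σ (Fin.castLE hkN.le j)))
      = (N.factorial : ℝ)⁻¹ * ∑ j : Fin k,
          ∑ σ : Equiv.Perm (Fin N), rp hkN x A σ (σ (Fin.castLE hkN.le j)) :=
    (Finset.mul_sum _ _ _).symm
  rw [e1, key_sum hkN x A, e2]
  have hNfac : (N.factorial : ℝ) ≠ 0 := by exact_mod_cast N.factorial_pos.ne'
  have hNne : (N : ℝ) ≠ 0 := by exact_mod_cast hN0.ne'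
  have hNk : (N : ℝ) - (k : ℝ) ≠ 0 := by
    have : (k : ℝ) < (N : ℝ) := by exact_mod_cast hkN
    linarith
  generalize (∑ σ : Equiv.Perm (Fin N), rp hkN x A σ (σ ⟨k, hkN⟩)) = S
  generalize (∑ j : Fin k, ∑ σ : Equiv.Perm (Fin N), rp hkN x A σ (σ (Fin.castLE hkN.le j))) = T
  field_simp
  ring

end FiniteDeFinetti
end
end

section
/- Let X be a Polish space and N ≥ 2. Suppose μ ∈ 𝒫_sym(X^N) and α is a Borel probability measure on 𝒫(X) with α(𝒫_{1/N}(X)) = 1 such that for every bounded continuous φ : X^N → ℝ, ∫_{X^N} φ dμ = ∫_{𝒫_{1/N}(X)} ( ∫_{X^N} φ d(F_{N,N}(λ)) ) dα(λ). Then α = Λ_# μ, where Λ : X^N → 𝒫(X) is the map Λ(x_1,…,x_N) := (1/N) Σ_{i=1}^N δ_{x_i}. In particular, the representing measure α is unique when k = N. -/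
open MeasureTheory Filter Topology ENNReal

noncomputable section

namespace FiniteDeFinetti

variable {X : Type*}

instance instBorelPM {Y : Type*} [MeasurableSpace Y] [TopologicalSpace Y]
    [OpensMeasurableSpace Y] : BorelSpace (ProbabilityMeasure Y) := ⟨rfl⟩

lemma integral_empirical [MeasurableSpace X] [TopologicalSpace X] [OpensMeasurableSpace X]
    [T1Space X] {N : ℕ} (x : Fin N → X) (f : BoundedContinuousFunction X ℝ) :
    ∫ a, f a ∂(empirical N x) = (N : ℝ)⁻¹ * ∑ i, f (x i) := by
  rw [empirical, integral_smul_measure, integral_finset_sum_measure (fun i _ => f.integrable _)]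
  simp [integral_dirac, ENNReal.toReal_inv]

lemma continuous_empPM [MeasurableSpace X] [TopologicalSpace X] [OpensMeasurableSpace X]
    [T1Space X] {N : ℕ} (hN : 0 < N) :
    Continuous (empPM (X := X) hN) := by
  rw [continuous_iff_continuousAt]
  intro x
  rw [ContinuousAt, ProbabilityMeasure.tendsto_iff_forall_integral_tendsto]
  intro f
  have key : ∀ y : Fin N → X, ∫ a, f a ∂(empPM hN y : Measure X) = (N : ℝ)⁻¹ * ∑ i, f (y i) :=
    fun y => integral_empirical y f
  simp_rw [key]
  exact ((continuous_const.mul (continuous_finset_sum _ fun i _ =>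
    f.continuous.comp (continuous_apply i))).tendsto x)

lemma empirical_apply_exists [MeasurableSpace X] [MeasurableSingletonClass X]
    (N : ℕ) (x : Fin N → X) (E : Set X) :
    ∃ j : ℕ, j ≤ N ∧ empirical N x E = j / N := by
  classical
  refine ⟨(Finset.univ.filter fun i => x i ∈ E).card, ?_, ?_⟩
  · exact (Finset.card_filter_le _ _).trans_eq (by simp)
  · rw [empirical, Measure.smul_apply, Measure.finset_sum_apply]
    simp only [Measure.dirac_apply, Set.indicator_apply, Pi.one_apply]
    rw [Finset.sum_boole]
    simp [ENNReal.div_eq_inv_mul, smul_eq_mul]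
lemma empirical_comp_perm [MeasurableSpace X] {N : ℕ} (x : Fin N → X) (σ : Equiv.Perm (Fin N)) :
    empirical N (fun i => x (σ i)) = empirical N x := by
  unfold empirical
  congr 1
  exact Equiv.sum_comp σ (fun i => Measure.dirac (x i))

lemma FNk_integral_eq [MeasurableSpace X] [TopologicalSpace X] [BorelSpace X]
    [SecondCountableTopology X] [T1Space X]
    {N : ℕ} (hN : 0 < N) (Φ : BoundedContinuousFunction (ProbabilityMeasure X) ℝ)
    {lam : ProbabilityMeasure X} (hlam : lam ∈ QuantizedPM (X := X) N) :
    ∫ y, Φ (empPM hN y) ∂(FNk (X := X) (le_refl N) lam) = Φ lam := by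
  have hlam' : ∃ x : Fin N → X, (lam : Measure X) = empirical N x := hlam
  rw [FNk, dif_pos hlam']
  have hspec : (lam : Measure X) = empirical N (Classical.choose hlam') :=
    Classical.choose_spec hlam'
  set x₀ := Classical.choose hlam'
  have hmar : marginal (le_refl N) (symmetrize N (Measure.dirac x₀))
      = symmetrize N (Measure.dirac x₀) := by
    have h1 : (fun x : Fin N → X => fun i => x (Fin.castLE (le_refl N) i)) = id := rfl
    rw [marginal, h1, Measure.map_id]
  have hperm : ∀ σ : Equiv.Perm (Fin N), Measurable (fun x : Fin N → X => fun i => x (σ i)) :=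
    fun σ => measurable_pi_lambda _ fun i => measurable_pi_apply _
  rw [hmar, symmetrize]
  simp_rw [Measure.map_dirac' (hperm _)]
  have hsm : StronglyMeasurable (fun y : Fin N → X => Φ (empPM hN y)) :=
    (Φ.continuous.comp (continuous_empPM hN)).stronglyMeasurable
  rw [integral_smul_measure, integral_finset_sum_measure (fun σ _ => ?_)]
  · have hconst : ∀ σ : Equiv.Perm (Fin N),
        ∫ y, Φ (empPM hN y) ∂(Measure.dirac fun i => x₀ (σ i)) = Φ lam := by
      intro σ
      rw [integral_dirac' _ _ hsm]
      congr 1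
      refine Subtype.ext ?_
      show empirical N (fun i => x₀ (σ i)) = (lam : Measure X)
      rw [empirical_comp_perm, hspec]
    simp_rw [hconst]
    rw [Finset.sum_const, Finset.card_univ, Fintype.card_perm, Fintype.card_fin,
      nsmul_eq_mul, smul_eq_mul, ENNReal.toReal_inv, ENNReal.toReal_natCast,
      inv_mul_cancel_left₀ (Nat.cast_ne_zero.mpr N.factorial_ne_zero)]
  · exact (BoundedContinuousFunction.integrable _
      (Φ.compContinuous ⟨empPM hN, continuous_empPM hN⟩))
lemma sum_map_finset_sum {β M : Type*} [AddCommMonoid M] (F : Finset β)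
    (f : β → Multiset X) (g : X → M) :
    ((∑ b ∈ F, f b).map g).sum = ∑ b ∈ F, ((f b).map g).sum := by
  classical
  induction F using Finset.cons_induction with
  | empty => simp
  | cons a F ha ih => rw [Finset.sum_cons, Finset.sum_cons, Multiset.map_add, Multiset.sum_add, ih]

lemma card_finset_sum {β : Type*} (F : Finset β) (f : β → Multiset X) :
    Multiset.card (∑ b ∈ F, f b) = ∑ b ∈ F, Multiset.card (f b) := by
  classical
  induction F using Finset.cons_induction with
  | empty => simp
  | cons a F ha ih => rw [Finset.sum_cons, Finset.sum_cons, Multiset.card_add, ih]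

lemma isClosed_quantizedPM [MeasurableSpace X] [TopologicalSpace X] [PolishSpace X] [BorelSpace X]
    {N : ℕ} (hN : 0 < N) : IsClosed (QuantizedPM (X := X) N) := by
  classical
  letI := TopologicalSpace.upgradeIsCompletelyMetrizable X
  letI : PseudoMetricSpace (ProbabilityMeasure X) :=
    TopologicalSpace.pseudoMetrizableSpacePseudoMetric _
  refine IsSeqClosed.isClosed ?_
  rintro lams L hmem hlim
  choose x hx using hmem
  have hNne : (N : ℝ≥0∞) ≠ 0 := Nat.cast_ne_zero.mpr hN.ne'
  have hNnetop : (N : ℝ≥0∞) ≠ ∞ := natCast_ne_top N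
  set D : Set ℝ≥0∞ := (fun j : ℕ => (j : ℝ≥0∞) / N) '' (Set.Iic N) with hD
  have hDclosed : IsClosed D := ((Set.finite_Iic N).image _).isClosed
  have minD : ∀ d ∈ D, d ≠ 0 → (N : ℝ≥0∞)⁻¹ ≤ d := by
    rintro d ⟨j, -, rfl⟩ hd0
    have hj : 1 ≤ (j : ℝ≥0∞) := by
      rcases Nat.eq_zero_or_pos j with h | h
      · exact absurd (by simp [h]) hd0
      · exact_mod_cast h
    calc (N : ℝ≥0∞)⁻¹ = 1 / N := (one_div _).symm
    _ ≤ (j : ℝ≥0∞) / N := ENNReal.div_le_div_right hj _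
  have hmem_frontier : ∀ E : Set X, (L : Measure X) (frontier E) = 0 →
      (L : Measure X) E ∈ D := by
    intro E hE
    have htt := ProbabilityMeasure.tendsto_measure_of_null_frontier_of_tendsto' hlim hE
    refine hDclosed.mem_of_tendsto htt (Filter.Eventually.of_forall fun n => ?_)
    rw [hx n]
    obtain ⟨j, hj, hval⟩ := empirical_apply_exists N (x n) E
    exact ⟨j, hj, hval.symm⟩
  -- key facts about singletons
  have key : ∀ z : X, (L : Measure X) {z} ∈ D ∧
      ((∀ r : ℝ, 0 < r → (L : Measure X) (Metric.ball z r) ≠ 0) →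
        (N : ℝ≥0∞)⁻¹ ≤ (L : Measure X) {z}) := by
    intro z
    obtain ⟨rs, rs_lim, hrs⟩ := exists_null_frontiers_thickening (L : Measure X) {z}
    have htends : Tendsto (fun k => (L : Measure X) (Metric.thickening (rs k) {z})) atTop
        (𝓝 ((L : Measure X) {z})) := by
      have h1 : Tendsto rs atTop (𝓝[>] (0 : ℝ)) :=
        tendsto_nhdsWithin_of_tendsto_nhds_of_eventually_within rs rs_lim
          (Filter.Eventually.of_forall fun k => (hrs k).1)
      exact (tendsto_measure_thickening_of_isClosed
        ⟨1, one_pos, measure_ne_top _ _⟩ isClosed_singleton).comp h1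
    have hball : ∀ k, (L : Measure X) (Metric.thickening (rs k) {z}) ∈ D :=
      fun k => hmem_frontier _ (hrs k).2
    constructor
    · exact hDclosed.mem_of_tendsto htends (Filter.Eventually.of_forall hball)
    · intro hpos
      refine ge_of_tendsto htends (Filter.Eventually.of_forall fun k => ?_)
      refine minD _ (hball k) ?_
      rw [Metric.thickening_singleton]
      exact hpos (rs k) (hrs k).1
  set A : Set X := {z | (L : Measure X) {z} ≠ 0} with hA
  have hAatom : ∀ z ∈ A, (N : ℝ≥0∞)⁻¹ ≤ (L : Measure X) {z} :=
    fun z hz => minD _ (key z).1 hz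
  have hAfin : A.Finite := by
    by_contra hinf
    obtain ⟨F, hFsub, hFcard⟩ := Set.Infinite.exists_subset_card_eq hinf (N + 1)
    have hdisj : (↑F : Set X).PairwiseDisjoint (fun z => ({z} : Set X)) :=
      fun a _ b _ hab => by simpa [Set.disjoint_singleton] using hab
    have hsum : (L : Measure X) (⋃ z ∈ F, ({z} : Set X)) = ∑ z ∈ F, (L : Measure X) {z} :=
      measure_biUnion_finset hdisj fun z _ => measurableSet_singleton z
    have hge : ((N : ℝ≥0∞) + 1) * (N : ℝ≥0∞)⁻¹ ≤ ∑ z ∈ F, (L : Measure X) {z} := by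
      have := Finset.card_nsmul_le_sum F (fun z => (L : Measure X) {z}) ((N : ℝ≥0∞)⁻¹)
        (fun z hz => hAatom z (hFsub hz))
      rw [hFcard] at this
      simpa [nsmul_eq_mul, add_mul] using this
    have hle1 : ∑ z ∈ F, (L : Measure X) {z} ≤ 1 := by
      rw [← hsum, ← measure_univ (μ := (L : Measure X))]
      exact measure_mono (Set.subset_univ _)
    have hgt : (1 : ℝ≥0∞) < ((N : ℝ≥0∞) + 1) * (N : ℝ≥0∞)⁻¹ := by
      conv_lhs => rw [← ENNReal.mul_inv_cancel hNne hNnetop]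
      exact (ENNReal.mul_lt_mul_left (ENNReal.inv_ne_zero.mpr hNnetop)
        (ENNReal.inv_ne_top.mpr hNne)) (ENNReal.lt_add_right hNnetop one_ne_zero)
    exact absurd (hge.trans hle1) (not_le.mpr hgt)
  have hAmeas : MeasurableSet A := hAfin.measurableSet
  have hAcompl : (L : Measure X) Aᶜ = 0 := by
    obtain ⟨B, hBcount, -, hBbasis⟩ := TopologicalSpace.exists_countable_basis X
    set 𝒩 : Set (Set X) := {b ∈ B | (L : Measure X) b = 0} with h𝒩
    have hsub : Aᶜ ⊆ ⋃₀ 𝒩 := by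
      intro z hz
      have hz0 : (L : Measure X) {z} = 0 := by
        have hz' := hz
        simp only [hA, Set.mem_compl_iff, Set.mem_setOf_eq, not_not] at hz'
        exact hz'
      have hznA : ¬ (N : ℝ≥0∞)⁻¹ ≤ (L : Measure X) {z} := by
        rw [hz0]
        exact fun hcon => (ENNReal.inv_ne_zero.mpr hNnetop) (nonpos_iff_eq_zero.mp hcon)
      have : ¬ (∀ r : ℝ, 0 < r → (L : Measure X) (Metric.ball z r) ≠ 0) :=
        fun hcon => hznA ((key z).2 hcon)
      push_neg at this
      obtain ⟨r, hr, hball⟩ := this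
      obtain ⟨b, hbB, hzb, hbsub⟩ := hBbasis.exists_subset_of_mem_open
        (Metric.mem_ball_self hr) Metric.isOpen_ball
      exact ⟨b, ⟨hbB, measure_mono_null hbsub hball⟩, hzb⟩
    refine measure_mono_null hsub ?_
    rw [measure_sUnion_null_iff (hBcount.mono (Set.sep_subset _ _))]
    exact fun s hs => hs.2
  -- extract atom masses
  set F : Finset X := hAfin.toFinset with hF
  have hmass : ∀ z ∈ F, ∃ jz : ℕ, jz ≤ N ∧ (L : Measure X) {z} = jz / N := by
    intro z hz
    obtain ⟨jz, hjz, hval⟩ := (key z).1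
    exact ⟨jz, hjz, hval.symm⟩
  choose! j hjle hjval using hmass
  have hLA : (L : Measure X) A = 1 := by
    have := measure_add_measure_compl (μ := (L : Measure X)) hAmeas
    rw [hAcompl, add_zero, measure_univ] at this
    exact this
  have hAdecomp : A = ⋃ z ∈ F, ({z} : Set X) := by
    ext z; simp [hF, Set.Finite.mem_toFinset]
  have hdisjF : (↑F : Set X).PairwiseDisjoint (fun z => ({z} : Set X)) :=
    fun a _ b _ hab => by simpa [Set.disjoint_singleton] using hab
  have hLAsum : ∑ z ∈ F, (L : Measure X) {z} = 1 := by
    rw [← measure_biUnion_finset hdisjF fun z _ => measurableSet_singleton z, ← hAdecomp, hLA]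
  have hjsum : ∑ z ∈ F, j z = N := by
    have h1 : ((∑ z ∈ F, j z : ℕ) : ℝ≥0∞) / N = 1 := by
      rw [Nat.cast_sum, ENNReal.div_eq_inv_mul, Finset.mul_sum, ← hLAsum]
      refine Finset.sum_congr rfl fun z hz => ?_
      rw [hjval z hz, ENNReal.div_eq_inv_mul]
    have h2 : ((∑ z ∈ F, j z : ℕ) : ℝ≥0∞) = N := by
      rw [ENNReal.div_eq_one_iff hNne hNnetop] at h1
      exact h1
    exact_mod_cast h2
  -- build the tuple
  set m : Multiset X := ∑ z ∈ F, Multiset.replicate (j z) z with hm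
  have hcard : Multiset.card m = N := by
    rw [hm, card_finset_sum]
    simpa using hjsum
  set l : List X := m.toList with hl
  have hlen : l.length = N := by rw [hl, Multiset.length_toList, hcard]
  refine ⟨fun i => l.get (Fin.cast hlen.symm i), ?_⟩
  have hdiracsum : ∑ i : Fin N, Measure.dirac (l.get (Fin.cast hlen.symm i))
      = ∑ z ∈ F, (j z) • Measure.dirac z := by
    calc ∑ i : Fin N, Measure.dirac (l.get (Fin.cast hlen.symm i))
        = ∑ i : Fin l.length, Measure.dirac (l.get i) :=
          Fintype.sum_equiv (finCongr hlen.symm) _ _ (fun i => rfl)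
    _ = (List.ofFn (fun i : Fin l.length => Measure.dirac (l.get i))).sum :=
          (Fin.sum_ofFn _).symm
    _ = (l.map (fun z => Measure.dirac z)).sum := by exact congrArg List.sum (List.ofFn_getElem_eq_map l _)
    _ = (m.map (fun z => Measure.dirac z)).sum := by
          rw [hl]
          rw [← Multiset.coe_toList m, Multiset.map_coe, Multiset.sum_coe]
          simp
    _ = ∑ z ∈ F, ((Multiset.replicate (j z) z).map (fun w => Measure.dirac w)).sum := by
          rw [hm, sum_map_finset_sum]
    _ = ∑ z ∈ F, (j z) • Measure.dirac z := by
          simp [Multiset.map_replicate, Multiset.sum_replicate]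
  have hLdecomp : (L : Measure X) = ∑ z ∈ F, (L : Measure X) {z} • Measure.dirac z := by
    ext E hE
    have h1 : (L : Measure X) E = (L : Measure X) (E ∩ A) := by
      have := measure_inter_add_diff (μ := (L : Measure X)) E hAmeas
      have h2 : (L : Measure X) (E \ A) = 0 :=
        measure_mono_null (Set.diff_subset_compl E A) hAcompl
      rw [h2, add_zero] at this
      exact this.symm
    have hEA : E ∩ A = ⋃ z ∈ F.filter (fun z => z ∈ E), ({z} : Set X) := by
      ext w
      simp only [Set.mem_inter_iff, Set.mem_iUnion, Finset.mem_filter, Set.mem_singleton_iff]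
      constructor
      · rintro ⟨hwE, hwA⟩
        exact ⟨w, ⟨(Set.Finite.mem_toFinset hAfin).mpr hwA, hwE⟩, rfl⟩
      · rintro ⟨v, ⟨hvF, hvE⟩, rfl⟩
        exact ⟨hvE, (Set.Finite.mem_toFinset hAfin).mp hvF⟩
    have h3 : (L : Measure X) (E ∩ A) = ∑ z ∈ F.filter (fun z => z ∈ E), (L : Measure X) {z} := by
      rw [hEA]
      exact measure_biUnion_finset
        (hdisjF.subset (Finset.coe_subset.mpr (Finset.filter_subset _ _)))
        fun z _ => measurableSet_singleton z
    rw [h1, h3, Measure.finset_sum_apply, Finset.sum_filter]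
    refine Finset.sum_congr rfl fun z hz => ?_
    rw [Measure.smul_apply, Measure.dirac_apply, Set.indicator_apply]
    simp only [Pi.one_apply, smul_eq_mul]
    split <;> simp
  show (L : Measure X) = empirical N _
  rw [hLdecomp, empirical, hdiracsum, Finset.smul_sum]
  refine Finset.sum_congr rfl fun z hz => ?_
  rw [hjval z hz, ← Nat.cast_smul_eq_nsmul ℝ≥0∞ (j z), smul_smul]
  congr 1
  rw [ENNReal.div_eq_inv_mul]
/-- uniqueness of the prior when `k = N`. If `μ ∈ 𝒫_sym(X^N)` is
represented as `μ = ∫ F_{N,N}(λ) dα(λ)` by a probability measure `α` on `𝒫(X)` concentrated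
on `𝒫_{1/N}(X)`, then `α = Λ_# μ` where `Λ(x_1,…,x_N) = (1/N) ∑ δ_{x_i}`. -/
theorem representing_measure_unique
    {X : Type*} [MeasurableSpace X] [TopologicalSpace X] [PolishSpace X] [BorelSpace X]
    {N : ℕ} (hN : 2 ≤ N)
    (μ : Measure (Fin N → X)) (hμ : IsProbabilityMeasure μ) (hsym : μ = symmetrize N μ)
    (α : Measure (ProbabilityMeasure X)) (hα : IsProbabilityMeasure α)
    (hαq : α (QuantizedPM (X := X) N) = 1)
    (hrep : ∀ φ : BoundedContinuousFunction (Fin N → X) ℝ,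
      ∫ y, φ y ∂μ = ∫ lam, (∫ y, φ y ∂(FNk (X := X) (le_refl N) lam)) ∂α) :
    α = μ.map (empPM (X := X) (show 0 < N by omega)) := by
  classical
  have hN0 : 0 < N := by omega
  haveI := hα
  haveI := hμ
  have hcont : Continuous (empPM (X := X) hN0) := continuous_empPM hN0
  have hmeas : Measurable (empPM (X := X) hN0) := hcont.measurable
  haveI : IsProbabilityMeasure (μ.map (empPM (X := X) hN0)) :=
    Measure.isProbabilityMeasure_map hmeas.aemeasurable
  have hQc : α (QuantizedPM (X := X) N)ᶜ = 0 := by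
    have hclosed := isClosed_quantizedPM (X := X) hN0
    rw [measure_compl hclosed.measurableSet (measure_ne_top _ _), hαq, measure_univ, tsub_self]
  have hmain : ∀ Φ : BoundedContinuousFunction (ProbabilityMeasure X) ℝ,
      ∫ lam, Φ lam ∂α = ∫ lam, Φ lam ∂(μ.map (empPM (X := X) hN0)) := by
    intro Φ
    have h1 : ∫ lam, Φ lam ∂(μ.map (empPM (X := X) hN0)) = ∫ y, Φ (empPM hN0 y) ∂μ :=
      integral_map hmeas.aemeasurable Φ.continuous.aestronglyMeasurable
    have h2 := hrep (Φ.compContinuous ⟨empPM hN0, hcont⟩)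
    simp only [BoundedContinuousFunction.compContinuous_apply, ContinuousMap.coe_mk] at h2
    have h3 : ∀ᵐ lam ∂α, (∫ y, Φ (empPM hN0 y) ∂(FNk (X := X) (le_refl N) lam)) = Φ lam := by
      rw [ae_iff]
      refine measure_mono_null ?_ hQc
      intro lam hlam
      exact fun hQ => hlam (FNk_integral_eq hN0 Φ hQ)
    calc ∫ lam, Φ lam ∂α
        = ∫ lam, (∫ y, Φ (empPM hN0 y) ∂(FNk (X := X) (le_refl N) lam)) ∂α :=
          (integral_congr_ae h3).symm
      _ = ∫ y, Φ (empPM hN0 y) ∂μ := h2.symm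
      _ = ∫ lam, Φ lam ∂(μ.map (empPM (X := X) hN0)) := h1.symm
  refine ext_of_forall_lintegral_eq_of_IsFiniteMeasure (fun f => ?_)
  have hiso : Isometry NNReal.toReal := fun _ _ => rfl
  set g : BoundedContinuousFunction (ProbabilityMeasure X) ℝ :=
    BoundedContinuousFunction.comp NNReal.toReal hiso.lipschitz f with hg
  have hint1 : Integrable (fun lam => ((f lam : ℝ))) α := g.integrable α
  have hint2 : Integrable (fun lam => ((f lam : ℝ))) (μ.map (empPM (X := X) hN0)) :=
    g.integrable _
  rw [lintegral_coe_eq_integral _ hint1, lintegral_coe_eq_integral _ hint2]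
  congr 1
  exact hmain g

end FiniteDeFinetti
end
end
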